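/- arXiv:1905.09117 — 8 statements merged into one kernel-verified Lean document; each statement's English description precedes it below -/
import Mathlib

section
/- Every extreme point (E₁,E₂,ω₁,ω₂) of the quantum set Q admits a two-dimensional quantum representation in Bloch form: there exist unit vectors n₁, n₂, m, k in ℝ³ such that Eₓ = nₓ·m and (1 + nₓ·k)/2 ≤ ωₓ for x = 1,2; equivalently, the qubit states ρₓ = (1 + nₓ·σ)/2, the measurement M = m·σ and the energy operator O = (1 + k·σ)/2, where σ = (σₓ,σ_y,σ_z) is the vector of Pauli matrices, form a quantum representation of the behaviour. -/
open scoped ComplexOrder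

open scoped InnerProductSpace
open Matrix Finset

lemma cs_dot (d : ℕ) (x y : Fin d → ℂ) :
    ‖(star x) ⬝ᵥ y‖ ^ 2 ≤ ((star x) ⬝ᵥ x).re * ((star y) ⬝ᵥ y).re := by
  set X : EuclideanSpace ℂ (Fin d) := (WithLp.equiv 2 _).symm x
  set Y : EuclideanSpace ℂ (Fin d) := (WithLp.equiv 2 _).symm y
  have h := norm_inner_le_norm (𝕜 := ℂ) X Y
  have hxy : ⟪X, Y⟫_ℂ = (star x) ⬝ᵥ y := by
    simp [PiLp.inner_apply, dotProduct, X, Y, mul_comm]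
  have hxx : ((star x) ⬝ᵥ x).re = ‖X‖ ^ 2 := by
    rw [← inner_self_eq_norm_sq (𝕜 := ℂ)]
    simp only [PiLp.inner_apply]
    simp [dotProduct, X, mul_comm]
    refine Finset.sum_congr rfl fun i _ => ?_
    rw [← Complex.ofReal_pow, Complex.ofReal_re, Complex.sq_norm, Complex.normSq_apply]
  have hyy : ((star y) ⬝ᵥ y).re = ‖Y‖ ^ 2 := by
    rw [← inner_self_eq_norm_sq (𝕜 := ℂ)]
    simp only [PiLp.inner_apply]
    simp [dotProduct, Y, mul_comm]
    refine Finset.sum_congr rfl fun i _ => ?_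
    rw [← Complex.ofReal_pow, Complex.ofReal_re, Complex.sq_norm, Complex.normSq_apply]
  rw [hxx, hyy, ← hxy, ← mul_pow]
  exact pow_le_pow_left₀ (norm_nonneg _) h 2

open scoped MatrixOrder in
lemma Matrix.posSemidef_iff_eq_transpose_mul_self {d : ℕ} {A : Matrix (Fin d) (Fin d) ℂ} :
    A.PosSemidef ↔ ∃ B : Matrix (Fin d) (Fin d) ℂ, A = Bᴴ * B := by
  constructor
  · intro hA
    have h0 : 0 ≤ A := hA.nonneg
    refine ⟨CFC.sqrt A, ?_⟩
    rw [← Matrix.star_eq_conjTranspose, (CFC.sqrt_nonneg A).isSelfAdjoint.star_eq]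
    exact (CFC.sqrt_mul_sqrt_self A h0).symm
  · rintro ⟨B, rfl⟩
    exact posSemidef_conjTranspose_mul_self B

lemma psd_cs {d : ℕ} {A : Matrix (Fin d) (Fin d) ℂ} (hA : A.PosSemidef) (x y : Fin d → ℂ) :
    ‖(star x) ⬝ᵥ A *ᵥ y‖ ^ 2 ≤ ((star x) ⬝ᵥ A *ᵥ x).re * ((star y) ⬝ᵥ A *ᵥ y).re := by
  obtain ⟨B, rfl⟩ := Matrix.posSemidef_iff_eq_transpose_mul_self.mp hA
  have key : ∀ z w : Fin d → ℂ, (star z) ⬝ᵥ (Bᴴ * B) *ᵥ w = star (B *ᵥ z) ⬝ᵥ (B *ᵥ w) := by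
    intro z w
    rw [← Matrix.mulVec_mulVec, Matrix.dotProduct_mulVec, Matrix.vecMul_conjTranspose, star_star]
  rw [key, key, key]
  exact cs_dot d _ _

lemma trace_mul_diag_re {d : ℕ} {A : Matrix (Fin d) (Fin d) ℂ} (hA : A.PosSemidef)
    (i : Fin d) : 0 ≤ (A i i).re ∧ (A i i).im = 0 := by
  have h := hA.dotProduct_mulVec_nonneg (Pi.single i 1)
  have : (star (Pi.single i 1 : Fin d → ℂ)) ⬝ᵥ A *ᵥ (Pi.single i 1) = A i i := by
    simp [Matrix.mulVec_single, dotProduct, Pi.single_apply, star_apply]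
  rw [this] at h
  exact ⟨(Complex.le_def.mp h).1, ((Complex.le_def.mp h).2).symm⟩

lemma psd_trace_re_nonneg {d : ℕ} {A B : Matrix (Fin d) (Fin d) ℂ}
    (hA : A.PosSemidef) (hB : B.PosSemidef) : 0 ≤ ((A * B).trace).re := by
  obtain ⟨C, rfl⟩ := Matrix.posSemidef_iff_eq_transpose_mul_self.mp hB
  have h1 : (A * (Cᴴ * C)).trace = (C * A * Cᴴ).trace := by
    rw [← Matrix.mul_assoc, Matrix.trace_mul_cycle]
  rw [h1]
  have hP : (C * A * Cᴴ).PosSemidef := hA.mul_mul_conjTranspose_same C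
  rw [Matrix.trace]
  rw [Complex.re_sum]
  exact Finset.sum_nonneg fun i _ => (trace_mul_diag_re hP i).1

lemma trace_decomp {d : ℕ} {ρ : Matrix (Fin d) (Fin d) ℂ} (hρ : ρ.IsHermitian)
    (A : Matrix (Fin d) (Fin d) ℂ) :
    (ρ * A).trace = ∑ i, (hρ.eigenvalues i : ℂ) *
      ((star (fun j => (hρ.eigenvectorUnitary : Matrix (Fin d) (Fin d) ℂ) j i)) ⬝ᵥ
        A *ᵥ (fun j => (hρ.eigenvectorUnitary : Matrix (Fin d) (Fin d) ℂ) j i)) := by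
  set U : Matrix (Fin d) (Fin d) ℂ := (hρ.eigenvectorUnitary : Matrix (Fin d) (Fin d) ℂ) with hU
  have hUU : star U * U = 1 := Matrix.mem_unitaryGroup_iff'.mp hρ.eigenvectorUnitary.2
  conv_lhs => rw [hρ.spectral_theorem, Unitary.conjStarAlgAut_apply]
  rw [show (U * Matrix.diagonal (RCLike.ofReal ∘ hρ.eigenvalues) * star U) * A
      = U * (Matrix.diagonal (RCLike.ofReal ∘ hρ.eigenvalues) * (star U * A)) by
        simp only [Matrix.mul_assoc]]
  rw [Matrix.trace_mul_comm]
  rw [show Matrix.diagonal (RCLike.ofReal ∘ hρ.eigenvalues) * (star U * A) * U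
      = Matrix.diagonal (RCLike.ofReal ∘ hρ.eigenvalues) * (star U * A * U) by
        simp only [Matrix.mul_assoc]]
  rw [Matrix.trace]
  apply Finset.sum_congr rfl
  intro i _
  rw [Matrix.diag_apply, Matrix.diagonal_mul]
  congr 1
  simp only [Matrix.mul_apply, Matrix.star_apply, dotProduct, Matrix.mulVec,
    Matrix.conjTranspose_apply, Finset.sum_mul, Finset.mul_sum, dotProduct]
  rw [Finset.sum_comm]
  apply Finset.sum_congr rfl
  intro j _
  apply Finset.sum_congr rfl
  intro k _
  simp only [Pi.star_apply]
  ring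

lemma trace_mul_vecMulVec {d : ℕ} (ρ : Matrix (Fin d) (Fin d) ℂ) (v : Fin d → ℂ) :
    (ρ * Matrix.vecMulVec v (star v)).trace = (star v) ⬝ᵥ ρ *ᵥ v := by
  simp only [Matrix.trace, Matrix.diag_apply, Matrix.mul_apply, Matrix.vecMulVec_apply,
    dotProduct, Matrix.mulVec, Pi.star_apply, Finset.mul_sum]
  apply Finset.sum_congr rfl; intro i _
  apply Finset.sum_congr rfl; intro j _
  ring

lemma pure_ineq {e₀ X c a b : ℝ} (ha : 0 ≤ a) (hb : 0 ≤ b) (hc : 0 ≤ c)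
    (hab : 2 * c ≤ a + b) (ha2 : a ^ 2 ≤ (1 - e₀) * (1 - X)) (hb2 : b ^ 2 ≤ (1 + e₀) * (1 + X))
    (he1 : -1 ≤ e₀) (he2 : e₀ ≤ 1) (hX1 : -1 ≤ X) (hX2 : X ≤ 1) :
    2 * c ^ 2 - 1 ≤ e₀ * X + Real.sqrt (1 - e₀ ^ 2) * Real.sqrt (1 - X ^ 2) := by
  have h1 : (0:ℝ) ≤ (1 - e₀) * (1 - X) := mul_nonneg (by linarith) (by linarith)
  have h2 : (0:ℝ) ≤ (1 + e₀) * (1 + X) := mul_nonneg (by linarith) (by linarith)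
  have ha' : a ≤ Real.sqrt ((1 - e₀) * (1 - X)) := by
    rw [show a = Real.sqrt (a ^ 2) from (Real.sqrt_sq ha).symm]
    exact Real.sqrt_le_sqrt ha2
  have hb' : b ≤ Real.sqrt ((1 + e₀) * (1 + X)) := by
    rw [show b = Real.sqrt (b ^ 2) from (Real.sqrt_sq hb).symm]
    exact Real.sqrt_le_sqrt hb2
  have hprod : Real.sqrt ((1 - e₀) * (1 - X)) * Real.sqrt ((1 + e₀) * (1 + X))
      = Real.sqrt (1 - e₀ ^ 2) * Real.sqrt (1 - X ^ 2) := by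
    rw [← Real.sqrt_mul h1, ← Real.sqrt_mul (by nlinarith : (0:ℝ) ≤ 1 - e₀ ^ 2)]
    ring_nf
  have hab' : a * b ≤ Real.sqrt (1 - e₀ ^ 2) * Real.sqrt (1 - X ^ 2) := by
    rw [← hprod]
    exact mul_le_mul ha' hb' hb (Real.sqrt_nonneg _)
  nlinarith [sq_nonneg (a + b - 2 * c)]

lemma jensen_sqrt {ι : Type*} (s : Finset ι) (l X : ι → ℝ) (hl : ∀ i ∈ s, 0 ≤ l i)
    (hsum : ∑ i ∈ s, l i = 1) (hX : ∀ i ∈ s, |X i| ≤ 1) :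
    ∑ i ∈ s, l i * Real.sqrt (1 - X i ^ 2) ≤ Real.sqrt (1 - (∑ i ∈ s, l i * X i) ^ 2) := by
  have h1 : (∑ i ∈ s, l i * Real.sqrt (1 - X i ^ 2)) ^ 2 ≤ 1 - (∑ i ∈ s, l i * X i) ^ 2 := by
    have cs1 := Finset.sum_mul_sq_le_sq_mul_sq s (fun i => Real.sqrt (l i))
      (fun i => Real.sqrt (l i) * Real.sqrt (1 - X i ^ 2))
    have cs2 := Finset.sum_mul_sq_le_sq_mul_sq s (fun i => Real.sqrt (l i))
      (fun i => Real.sqrt (l i) * X i)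
    have e1 : ∀ i ∈ s, Real.sqrt (l i) * (Real.sqrt (l i) * Real.sqrt (1 - X i ^ 2))
        = l i * Real.sqrt (1 - X i ^ 2) := by
      intro i hi; rw [← mul_assoc, Real.mul_self_sqrt (hl i hi)]
    have e2 : ∀ i ∈ s, Real.sqrt (l i) ^ 2 = l i := fun i hi => Real.sq_sqrt (hl i hi)
    have e3 : ∀ i ∈ s, (Real.sqrt (l i) * Real.sqrt (1 - X i ^ 2)) ^ 2 = l i * (1 - X i ^ 2) := by
      intro i hi
      have hx2 : (0:ℝ) ≤ 1 - X i ^ 2 := by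
        have := abs_le.mp (hX i hi); nlinarith
      rw [mul_pow, Real.sq_sqrt (hl i hi), Real.sq_sqrt hx2]
    have e4 : ∀ i ∈ s, Real.sqrt (l i) * (Real.sqrt (l i) * X i) = l i * X i := by
      intro i hi; rw [← mul_assoc, Real.mul_self_sqrt (hl i hi)]
    have e5 : ∀ i ∈ s, (Real.sqrt (l i) * X i) ^ 2 = l i * X i ^ 2 := by
      intro i hi; rw [mul_pow, Real.sq_sqrt (hl i hi)]
    rw [Finset.sum_congr rfl e1, Finset.sum_congr rfl e2, Finset.sum_congr rfl e3, hsum, one_mul]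
      at cs1
    rw [Finset.sum_congr rfl e4, Finset.sum_congr rfl e2, Finset.sum_congr rfl e5, hsum, one_mul]
      at cs2
    have hexp : ∑ i ∈ s, l i * (1 - X i ^ 2) = 1 - ∑ i ∈ s, l i * X i ^ 2 := by
      simp only [mul_sub, mul_one, Finset.sum_sub_distrib, hsum]
    rw [hexp] at cs1
    linarith
  have h0 : 0 ≤ ∑ i ∈ s, l i * Real.sqrt (1 - X i ^ 2) :=
    Finset.sum_nonneg fun i hi => mul_nonneg (hl i hi) (Real.sqrt_nonneg _)
  calc ∑ i ∈ s, l i * Real.sqrt (1 - X i ^ 2)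
      = Real.sqrt ((∑ i ∈ s, l i * Real.sqrt (1 - X i ^ 2)) ^ 2) := (Real.sqrt_sq h0).symm
    _ ≤ Real.sqrt (1 - (∑ i ∈ s, l i * X i) ^ 2) := Real.sqrt_le_sqrt h1

/-- bounds on a Hermitian-contraction quadratic form at a unit vector -/
lemma quad_bounds {d : ℕ} {M : Matrix (Fin d) (Fin d) ℂ}
    (h1M : (1 - M).PosSemidef) (h2M : (1 + M).PosSemidef) {u : Fin d → ℂ}
    (hu : (star u) ⬝ᵥ u = 1) :
    ((star u) ⬝ᵥ M *ᵥ u).im = 0 ∧ -1 ≤ ((star u) ⬝ᵥ M *ᵥ u).re ∧ ((star u) ⬝ᵥ M *ᵥ u).re ≤ 1 := by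
  have e1 : (star u) ⬝ᵥ (1 - M) *ᵥ u = 1 - (star u) ⬝ᵥ M *ᵥ u := by
    rw [Matrix.sub_mulVec, dotProduct_sub, Matrix.one_mulVec, hu]
  have e2 : (star u) ⬝ᵥ (1 + M) *ᵥ u = 1 + (star u) ⬝ᵥ M *ᵥ u := by
    rw [Matrix.add_mulVec, dotProduct_add, Matrix.one_mulVec, hu]
  have g1 := h1M.dotProduct_mulVec_nonneg u
  have g2 := h2M.dotProduct_mulVec_nonneg u
  rw [e1] at g1; rw [e2] at g2
  have r1 := Complex.le_def.mp g1
  have r2 := Complex.le_def.mp g2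
  simp only [Complex.sub_re, Complex.sub_im, Complex.add_re, Complex.add_im, Complex.one_re,
    Complex.one_im, Complex.zero_re, Complex.zero_im] at r1 r2
  refine ⟨by linarith [r1.2, r2.2], by linarith [r2.1], by linarith [r1.1]⟩

lemma core_ineq {d : ℕ} {ρ M : Matrix (Fin d) (Fin d) ℂ} {v : Fin d → ℂ}
    (hρ : ρ.PosSemidef) (htr : ρ.trace = 1)
    (h1M : (1 - M).PosSemidef) (h2M : (1 + M).PosSemidef)
    (hv : (star v) ⬝ᵥ v = 1) :
    2 * ((star v) ⬝ᵥ ρ *ᵥ v).re - 1 ≤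
      ((star v) ⬝ᵥ M *ᵥ v).re * ((ρ * M).trace).re +
      Real.sqrt (1 - ((star v) ⬝ᵥ M *ᵥ v).re ^ 2) *
      Real.sqrt (1 - ((ρ * M).trace).re ^ 2) := by
  classical
  set U : Matrix (Fin d) (Fin d) ℂ := (hρ.1.eigenvectorUnitary : Matrix (Fin d) (Fin d) ℂ)
    with hUdef
  set w : Fin d → Fin d → ℂ := fun i j => U j i with hwdef
  set l : Fin d → ℝ := hρ.1.eigenvalues with hldef
  have hUU : star U * U = 1 := Matrix.mem_unitaryGroup_iff'.mp hρ.1.eigenvectorUnitary.2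
  have hw : ∀ i, (star (w i)) ⬝ᵥ (w i) = 1 := by
    intro i
    have := congrFun (congrFun hUU i) i
    simp only [Matrix.mul_apply, Matrix.star_apply, Matrix.one_apply_eq] at this
    simpa [dotProduct, w, Pi.star_apply] using this
  have hl0 : ∀ i, 0 ≤ l i := fun i => hρ.eigenvalues_nonneg i
  -- sum of eigenvalues = 1
  have hsum : ∑ i, l i = 1 := by
    have h1 := trace_decomp hρ.1 1
    rw [Matrix.mul_one, htr] at h1
    have h2 : ∀ i : Fin d, (l i : ℂ) *
        ((star fun j => U j i) ⬝ᵥ (1 : Matrix (Fin d) (Fin d) ℂ) *ᵥ fun j => U j i)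
        = (l i : ℂ) := by
      intro i
      rw [Matrix.one_mulVec]
      rw [show ((star fun j => U j i) ⬝ᵥ fun j => U j i) = (star (w i)) ⬝ᵥ (w i) from rfl,
        hw i, mul_one]
    rw [Finset.sum_congr rfl (fun i _ => h2 i)] at h1
    have h3 := congrArg Complex.re h1
    rw [Complex.re_sum] at h3
    simpa using h3.symm
  -- decomposition of E
  set Xc : Fin d → ℂ := fun i => (star (w i)) ⬝ᵥ M *ᵥ (w i) with hXcdef
  have hEdecomp : ((ρ * M).trace).re = ∑ i, l i * (Xc i).re := by
    have h1 := trace_decomp hρ.1 M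
    have := congrArg Complex.re h1
    rw [this]
    rw [Complex.re_sum]
    apply Finset.sum_congr rfl
    intro i _
    rw [Complex.re_ofReal_mul]
  -- bounds on Xc
  have hXb : ∀ i, (Xc i).im = 0 ∧ -1 ≤ (Xc i).re ∧ (Xc i).re ≤ 1 :=
    fun i => quad_bounds h1M h2M (hw i)
  have heb := quad_bounds h1M h2M hv
  set e₀ : ℝ := ((star v) ⬝ᵥ M *ᵥ v).re with he₀def
  -- decomposition of p
  set z : Fin d → ℂ := fun i => (star v) ⬝ᵥ (w i) with hzdef
  have hpdecomp : ((star v) ⬝ᵥ ρ *ᵥ v).re = ∑ i, l i * Complex.normSq (z i) := by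
    have hvv : (ρ * Matrix.vecMulVec v (star v)).trace = (star v) ⬝ᵥ ρ *ᵥ v := by
      simp only [Matrix.trace, Matrix.diag_apply, Matrix.mul_apply, Matrix.vecMulVec_apply,
        dotProduct, Matrix.mulVec, Pi.star_apply, Finset.mul_sum]
      apply Finset.sum_congr rfl; intro i _
      apply Finset.sum_congr rfl; intro j _
      ring
    have h1 := trace_decomp hρ.1 (Matrix.vecMulVec v (star v))
    rw [hvv] at h1
    have hterm : ∀ i, (star (fun j => U j i)) ⬝ᵥ (Matrix.vecMulVec v (star v)) *ᵥ
        (fun j => U j i) = (Complex.normSq (z i) : ℂ) := by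
      intro i
      have expand : (star (fun j => U j i)) ⬝ᵥ (Matrix.vecMulVec v (star v)) *ᵥ
          (fun j => U j i) = ((star (w i)) ⬝ᵥ v) * ((star v) ⬝ᵥ (w i)) := by
        simp only [dotProduct, Matrix.mulVec, Matrix.vecMulVec_apply, dotProduct,
          Pi.star_apply, Finset.mul_sum, Finset.sum_mul, w]
        rw [Finset.sum_comm]
        apply Finset.sum_congr rfl; intro a _
        apply Finset.sum_congr rfl; intro b _
        ring
      rw [expand]
      have hconj : (star (w i)) ⬝ᵥ v = starRingEnd ℂ (z i) := by
        simp only [z, dotProduct, map_sum, Pi.star_apply, RingHom.map_mul]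
        apply Finset.sum_congr rfl; intro a _
        simp [Complex.conj_conj, mul_comm]
      rw [hconj, mul_comm, Complex.mul_conj]
    have := congrArg Complex.re h1
    rw [this, Complex.re_sum]
    apply Finset.sum_congr rfl
    intro i _
    rw [hterm i]
    rw [← Complex.ofReal_mul, Complex.ofReal_re]
  -- per-eigenvector inequality
  have hper : ∀ i, 2 * Complex.normSq (z i) - 1 ≤
      e₀ * (Xc i).re + Real.sqrt (1 - e₀ ^ 2) * Real.sqrt (1 - (Xc i).re ^ 2) := by
    intro i
    have hsplit : (star v) ⬝ᵥ (1 - M) *ᵥ (w i) + (star v) ⬝ᵥ (1 + M) *ᵥ (w i) = 2 * z i := by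
      rw [← dotProduct_add, ← Matrix.add_mulVec]
      rw [show (1 - M) + (1 + M) = (2 : ℂ) • (1 : Matrix (Fin d) (Fin d) ℂ) by
        ext a b
        simp only [Matrix.add_apply, Matrix.sub_apply, Matrix.smul_apply, Matrix.one_apply,
          smul_eq_mul]
        split_ifs <;> ring]
      rw [Matrix.smul_mulVec, Matrix.one_mulVec, dotProduct_smul]
      simp [z, smul_eq_mul]
    have hab : 2 * ‖z i‖ ≤ ‖(star v) ⬝ᵥ (1 - M) *ᵥ (w i)‖
        + ‖(star v) ⬝ᵥ (1 + M) *ᵥ (w i)‖ := by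
      calc 2 * ‖z i‖ = ‖2 * z i‖ := by
            rw [norm_mul]
            norm_num
        _ = ‖(star v) ⬝ᵥ (1 - M) *ᵥ (w i) + (star v) ⬝ᵥ (1 + M) *ᵥ (w i)‖ := by
            rw [hsplit]
        _ ≤ _ := norm_add_le _ _
    have ha2 := psd_cs h1M v (w i)
    have hb2 := psd_cs h2M v (w i)
    have q1v : ((star v) ⬝ᵥ (1 - M) *ᵥ v).re = 1 - e₀ := by
      rw [Matrix.sub_mulVec, dotProduct_sub, Matrix.one_mulVec, hv]
      simp [e₀]
    have q2v : ((star v) ⬝ᵥ (1 + M) *ᵥ v).re = 1 + e₀ := by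
      rw [Matrix.add_mulVec, dotProduct_add, Matrix.one_mulVec, hv]
      simp [e₀]
    have q1w : ((star (w i)) ⬝ᵥ (1 - M) *ᵥ (w i)).re = 1 - (Xc i).re := by
      rw [Matrix.sub_mulVec, dotProduct_sub, Matrix.one_mulVec, hw i]
      simp [Xc]
    have q2w : ((star (w i)) ⬝ᵥ (1 + M) *ᵥ (w i)).re = 1 + (Xc i).re := by
      rw [Matrix.add_mulVec, dotProduct_add, Matrix.one_mulVec, hw i]
      simp [Xc]
    rw [q1v, q1w] at ha2
    rw [q2v, q2w] at hb2
    have := pure_ineq (norm_nonneg _) (norm_nonneg _) (norm_nonneg _)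
      hab ha2 hb2 heb.2.1 heb.2.2 (hXb i).2.1 (hXb i).2.2
    rwa [Complex.sq_norm] at this
  -- combine
  rw [hEdecomp, hpdecomp]
  have step1 : 2 * (∑ i, l i * Complex.normSq (z i)) - 1
      = ∑ i, l i * (2 * Complex.normSq (z i) - 1) := by
    simp only [mul_sub, mul_one, Finset.sum_sub_distrib, hsum, Finset.mul_sum]
    ring_nf
  rw [step1]
  calc ∑ i, l i * (2 * Complex.normSq (z i) - 1)
      ≤ ∑ i, l i * (e₀ * (Xc i).re + Real.sqrt (1 - e₀ ^ 2) * Real.sqrt (1 - (Xc i).re ^ 2)) :=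
        Finset.sum_le_sum fun i _ => mul_le_mul_of_nonneg_left (hper i) (hl0 i)
    _ = e₀ * (∑ i, l i * (Xc i).re)
        + Real.sqrt (1 - e₀ ^ 2) * ∑ i, l i * Real.sqrt (1 - (Xc i).re ^ 2) := by
        rw [Finset.mul_sum, Finset.mul_sum, ← Finset.sum_add_distrib]
        apply Finset.sum_congr rfl; intro i _; ring
    _ ≤ e₀ * (∑ i, l i * (Xc i).re)
        + Real.sqrt (1 - e₀ ^ 2) * Real.sqrt (1 - (∑ i, l i * (Xc i).re) ^ 2) := by
        have hj := jensen_sqrt Finset.univ l (fun i => (Xc i).re) (fun i _ => hl0 i) hsum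
          (fun i _ => abs_le.mpr ⟨(hXb i).2.1, (hXb i).2.2⟩)
        have := mul_le_mul_of_nonneg_left hj (Real.sqrt_nonneg (1 - e₀ ^ 2))
        linarith


noncomputable section

/-- A behaviour `(E, ω)` admits a (finite-dimensional) quantum representation. -/
def IsQuantumRep (E ω : Fin 2 → ℝ) : Prop :=
  ∃ (d : ℕ) (ρ : Fin 2 → Matrix (Fin d) (Fin d) ℂ)
    (M O : Matrix (Fin d) (Fin d) ℂ) (v : Fin d → ℂ),
    (∀ x, (ρ x).PosSemidef) ∧ (∀ x, (ρ x).trace = 1) ∧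
    M.IsHermitian ∧ (1 - M).PosSemidef ∧ (1 + M).PosSemidef ∧
    O.IsHermitian ∧ O.mulVec v = 0 ∧ (∑ i, Complex.normSq (v i)) = 1 ∧
    (O - (1 - Matrix.vecMulVec v (star v))).PosSemidef ∧
    (∀ x, (ρ x * M).trace = (E x : ℂ)) ∧
    (∀ x, ((ρ x * O).trace).re ≤ ω x)

/-- The quantum set `Q`: all finite convex combinations of behaviours with a
quantum representation. -/
def QuantumSet : Set ((Fin 2 → ℝ) × (Fin 2 → ℝ)) :=
  convexHull ℝ {b | IsQuantumRep b.1 b.2}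

/-- Lemma 1: every extreme point of the quantum set admits a two-dimensional
Bloch-form representation, described by unit vectors `n₁ n₂ m k` in `ℝ³`. -/
theorem extremePoint_quantumSet_bloch_rep (E ω : Fin 2 → ℝ)
    (h : (E, ω) ∈ Set.extremePoints ℝ QuantumSet) :
    ∃ (n : Fin 2 → Fin 3 → ℝ) (m k : Fin 3 → ℝ),
      (∀ x, ∑ i, n x i * n x i = 1) ∧ (∑ i, m i * m i = 1) ∧
      (∑ i, k i * k i = 1) ∧
      (∀ x, E x = ∑ i, n x i * m i) ∧
      (∀ x, (1 + ∑ i, n x i * k i) / 2 ≤ ω x) := by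
  have h' : (E, ω) ∈ Set.extremePoints ℝ
      (convexHull ℝ {b : (Fin 2 → ℝ) × (Fin 2 → ℝ) | IsQuantumRep b.1 b.2}) := h
  have hrep : IsQuantumRep E ω := by
    have hm := extremePoints_convexHull_subset h'
    simpa using hm
  obtain ⟨d, ρ, M, O, v, hρ, htrρ, hM, h1M, h2M, hO, hOv, hv1, hOP, hEeq, hω⟩ := hrep
  -- v is a unit vector
  have hv : (star v) ⬝ᵥ v = 1 := by
    have : (star v) ⬝ᵥ v = ((∑ i, Complex.normSq (v i) : ℝ) : ℂ) := by
      push_cast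
      simp only [dotProduct, Pi.star_apply]
      apply Finset.sum_congr rfl; intro i _
      rw [mul_comm, Complex.star_def, Complex.mul_conj]
    rw [this, hv1, Complex.ofReal_one]
  set e₀ : ℝ := ((star v) ⬝ᵥ M *ᵥ v).re with he₀def
  have heb := quad_bounds h1M h2M hv
  set p : Fin 2 → ℝ := fun x => ((star v) ⬝ᵥ (ρ x) *ᵥ v).re with hpdef
  -- E x is the real part of the trace
  have hEre : ∀ x, ((ρ x * M).trace).re = E x := by
    intro x; rw [hEeq x, Complex.ofReal_re]
  -- |E x| ≤ 1
  have hE1 : ∀ x, -1 ≤ E x ∧ E x ≤ 1 := by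
    intro x
    have g1 := psd_trace_re_nonneg (hρ x) h1M
    have g2 := psd_trace_re_nonneg (hρ x) h2M
    rw [Matrix.mul_sub, Matrix.mul_one, Matrix.trace_sub, Complex.sub_re, htrρ x,
      hEeq x, Complex.one_re, Complex.ofReal_re] at g1
    rw [Matrix.mul_add, Matrix.mul_one, Matrix.trace_add, Complex.add_re, htrρ x,
      hEeq x, Complex.one_re, Complex.ofReal_re] at g2
    constructor <;> linarith
  -- ω x ≥ 1 - p x
  have hωp : ∀ x, 1 - p x ≤ ω x := by
    intro x
    have g := psd_trace_re_nonneg (hρ x) hOP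
    rw [Matrix.mul_sub, Matrix.trace_sub, Matrix.mul_sub, Matrix.mul_one, Matrix.trace_sub,
      trace_mul_vecMulVec] at g
    simp only [Complex.sub_re] at g
    rw [htrρ x] at g
    simp only [Complex.one_re] at g
    have := hω x
    dsimp only [p]
    linarith
  -- core inequality
  have hcore : ∀ x, 2 * p x - 1 ≤ e₀ * E x +
      Real.sqrt (1 - e₀ ^ 2) * Real.sqrt (1 - E x ^ 2) := by
    intro x
    have := core_ineq (hρ x) (htrρ x) h1M h2M hv
    rwa [hEre x] at this
  -- construction
  set θ : ℝ := Real.arccos e₀ with hθdef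
  set ψ : Fin 2 → ℝ := fun x => Real.arccos (E x) with hψdef
  refine ⟨fun x => ![Real.cos (θ - ψ x), Real.sin (θ - ψ x), 0],
    ![Real.cos θ, Real.sin θ, 0], ![-1, 0, 0], ?_, ?_, ?_, ?_, ?_⟩
  · intro x
    simp [Fin.sum_univ_three]
    nlinarith [Real.sin_sq_add_cos_sq (θ - ψ x)]
  · simp [Fin.sum_univ_three]
    nlinarith [Real.sin_sq_add_cos_sq θ]
  · simp [Fin.sum_univ_three]
  · intro x
    simp only [Fin.sum_univ_three, Matrix.cons_val_zero, Matrix.cons_val_one, Matrix.head_cons,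
      Matrix.cons_val_two, Matrix.tail_cons]
    have : Real.cos (θ - ψ x) * Real.cos θ + Real.sin (θ - ψ x) * Real.sin θ
        = Real.cos ((θ - ψ x) - θ) := (Real.cos_sub _ _).symm
    rw [show ((θ - ψ x) - θ) = -ψ x by ring, Real.cos_neg] at this
    rw [this]
    rw [Real.cos_arccos (hE1 x).1 (hE1 x).2]
    ring
  · intro x
    simp only [Fin.sum_univ_three, Matrix.cons_val_zero, Matrix.cons_val_one, Matrix.head_cons,
      Matrix.cons_val_two, Matrix.tail_cons]
    have hcos : Real.cos (θ - ψ x) = e₀ * E x +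
        Real.sqrt (1 - e₀ ^ 2) * Real.sqrt (1 - E x ^ 2) := by
      rw [Real.cos_sub, hθdef, hψdef]
      rw [Real.cos_arccos heb.2.1 heb.2.2, Real.cos_arccos (hE1 x).1 (hE1 x).2,
        Real.sin_arccos, Real.sin_arccos]
    have h1 : 1 - 2 * ω x ≤ Real.cos (θ - ψ x) := by
      rw [hcos]
      have := hcore x
      have := hωp x
      linarith
    nlinarith [h1]

end
end

section
/- If a behaviour (E₁,E₂,ω₁,ω₂) satisfies −1 ≤ Eₓ ≤ 1 and ωₓ ≥ 0 for x = 1,2, and moreover ω₁ + ω₂ ≥ 1, then it belongs to the quantum set Q. -/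
open scoped ComplexOrder

noncomputable section

/-- Key construction: if `ω 0 ≥ 0` and `ω 1 ≥ 1`, the behaviour has a direct
quantum representation with `d = 2`, diagonal matrices. -/
lemma rep_main (E ω : Fin 2 → ℝ) (hE : ∀ x, -1 ≤ E x ∧ E x ≤ 1) (h0 : 0 ≤ ω 0)
    (h1 : 1 ≤ ω 1) : IsQuantumRep E ω := by
  refine ⟨2, ![Matrix.diagonal ![1,0], Matrix.diagonal ![0,1]],
    Matrix.diagonal ![(E 0 : ℂ), (E 1 : ℂ)], Matrix.diagonal ![0,1], ![1,0],
    ?_, ?_, ?_, ?_, ?_, ?_, ?_, ?_, ?_, ?_, ?_⟩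
  · intro x; fin_cases x <;>
      · refine Matrix.posSemidef_diagonal_iff.mpr ?_
        intro i; fin_cases i <;> simp
  · intro x; fin_cases x <;> simp [Matrix.trace_diagonal, Fin.sum_univ_two]
  · refine Matrix.isHermitian_diagonal_iff.mpr ?_
    intro i; fin_cases i <;> simp [IsSelfAdjoint, Complex.conj_ofReal]
  · rw [← Matrix.diagonal_one, Matrix.diagonal_sub]
    refine Matrix.posSemidef_diagonal_iff.mpr ?_
    intro i; fin_cases i <;>
      simp [Complex.le_def, Complex.ofReal_re, (hE 0).2, (hE 1).2, sub_nonneg]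
  · rw [← Matrix.diagonal_one, Matrix.diagonal_add]
    refine Matrix.posSemidef_diagonal_iff.mpr ?_
    intro i; fin_cases i <;>
      simp [Complex.le_def]
    · linarith [(hE 0).1]
    · linarith [(hE 1).1]
  · refine Matrix.isHermitian_diagonal_iff.mpr ?_
    intro i; fin_cases i <;> simp [IsSelfAdjoint]
  · funext i; fin_cases i <;> simp [Matrix.mulVec_diagonal]
  · simp [Fin.sum_univ_two]
  · have hv : Matrix.vecMulVec (![1,0] : Fin 2 → ℂ) (star ![1,0]) =
        Matrix.diagonal ![1,0] := by
      ext i j; fin_cases i <;> fin_cases j <;>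
        simp [Matrix.vecMulVec_apply, Matrix.diagonal]
    rw [hv, ← Matrix.diagonal_one, Matrix.diagonal_sub, Matrix.diagonal_sub]
    refine Matrix.posSemidef_diagonal_iff.mpr ?_
    intro i; fin_cases i <;> simp
  · intro x; fin_cases x <;>
      simp [Matrix.diagonal_mul_diagonal, Matrix.trace_diagonal, Fin.sum_univ_two]
  · intro x; fin_cases x <;>
      simp [Matrix.diagonal_mul_diagonal, Matrix.trace_diagonal, Fin.sum_univ_two]
    · exact h0
    · exact h1

/-- Symmetry of the representation property under swapping the two settings. -/
lemma rep_swap (E ω : Fin 2 → ℝ)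
    (h : IsQuantumRep (E ∘ Equiv.swap 0 1) (ω ∘ Equiv.swap 0 1)) :
    IsQuantumRep E ω := by
  obtain ⟨d, ρ, M, O, v, h1, h2, h3, h4, h5, h6, h7, h8, h9, h10, h11⟩ := h
  exact ⟨d, ρ ∘ Equiv.swap 0 1, M, O, v,
    fun x => h1 _, fun x => h2 _, h3, h4, h5, h6, h7, h8, h9,
    fun x => by simpa using h10 (Equiv.swap 0 1 x),
    fun x => by simpa using h11 (Equiv.swap 0 1 x)⟩

lemma rep_main' (E ω : Fin 2 → ℝ) (hE : ∀ x, -1 ≤ E x ∧ E x ≤ 1) (h0 : 1 ≤ ω 0)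
    (h1 : 0 ≤ ω 1) : IsQuantumRep E ω := by
  refine rep_swap E ω (rep_main _ _ (fun x => hE _) ?_ ?_) <;> simpa

/-- Proposition 1: behaviours satisfying the trivial constraints with
`ω₁ + ω₂ ≥ 1` are quantum. -/
theorem mem_quantumSet_of_one_le_energy_sum (E ω : Fin 2 → ℝ)
    (hE : ∀ x, -1 ≤ E x ∧ E x ≤ 1) (hω : ∀ x, 0 ≤ ω x)
    (hsum : 1 ≤ ω 0 + ω 1) :
    (E, ω) ∈ QuantumSet := by
  by_cases hc0 : 1 ≤ ω 0
  · exact subset_convexHull ℝ _ (rep_main' E ω hE hc0 (hω 1))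
  by_cases hc1 : 1 ≤ ω 1
  · exact subset_convexHull ℝ _ (rep_main E ω hE (hω 0) hc1)
  push_neg at hc0 hc1
  set s := ω 0 + ω 1 with hs
  set t : ℝ := (1 - ω 0) / (2 - s) with ht
  have h2s : 0 < 2 - s := by simp only [hs]; linarith
  have ht0 : 0 ≤ t := div_nonneg (by linarith) h2s.le
  have ht1 : 1 - t = (1 - ω 1) / (2 - s) := by
    rw [eq_div_iff h2s.ne', sub_mul, ht, div_mul_cancel₀ _ h2s.ne', hs]; ring
  have h1t0 : 0 ≤ 1 - t := ht1 ▸ div_nonneg (by linarith) h2s.le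
  have hA : IsQuantumRep E ![s - 1, 1] :=
    rep_main E _ hE (by simp; linarith) (by simp)
  have hB : IsQuantumRep E ![1, s - 1] :=
    rep_main' E _ hE (by simp) (by simp; linarith)
  have hA' : ((E, ![s - 1, 1]) : (Fin 2 → ℝ) × (Fin 2 → ℝ)) ∈
      {b : (Fin 2 → ℝ) × (Fin 2 → ℝ) | IsQuantumRep b.1 b.2} := hA
  have hB' : ((E, ![1, s - 1]) : (Fin 2 → ℝ) × (Fin 2 → ℝ)) ∈
      {b : (Fin 2 → ℝ) × (Fin 2 → ℝ) | IsQuantumRep b.1 b.2} := hB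
  have hmem := (convex_convexHull ℝ {b : (Fin 2 → ℝ) × (Fin 2 → ℝ) | IsQuantumRep b.1 b.2})
    (subset_convexHull ℝ _ hA') (subset_convexHull ℝ _ hB') ht0 h1t0 (by ring)
  have key : t • ((E, ![s - 1, 1]) : (Fin 2 → ℝ) × (Fin 2 → ℝ))
      + (1 - t) • (E, ![1, s - 1]) = (E, ω) := by
    have htsum : t * (2 - s) = 1 - ω 0 := by
      rw [ht, div_mul_cancel₀]; exact h2s.ne'
    refine Prod.ext ?_ ?_
    · funext i
      simp [Prod.smul_fst]
    · funext i
      fin_cases i <;>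
        · simp [Prod.smul_snd]
          nlinarith [htsum]
  rw [← key]
  exact hmem

end
end

section
/- For all E₁, E₂ ∈ [−1,1] and all ω₁, ω₂ ∈ [0,1], the inequality (1/2)(√(1+E₁)·√(1+E₂) + √(1−E₁)·√(1−E₂)) ≥ √(1−ω₁)·√(1−ω₂) − √(ω₁)·√(ω₂) holds if and only if |arcsin E₁ − arcsin E₂| ≤ 2(arcsin √ω₁ + arcsin √ω₂). -/
open Real

lemma sqrt_one_add_sin' (θ : ℝ) (h : θ ∈ Set.Icc (-(π/2)) (π/2)) :
    Real.sqrt (1 + Real.sin θ) = Real.cos (θ/2) + Real.sin (θ/2) := by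
  obtain ⟨h1, h2⟩ := h
  have hpi := Real.pi_pos
  have hnn : 0 ≤ Real.cos (θ/2) + Real.sin (θ/2) := by
    have hs : 0 ≤ Real.sin (θ/2 + π/4) :=
      Real.sin_nonneg_of_nonneg_of_le_pi (by linarith) (by linarith)
    rw [Real.sin_add, Real.sin_pi_div_four, Real.cos_pi_div_four] at hs
    have h2pos : (0:ℝ) < Real.sqrt 2 := Real.sqrt_pos.mpr (by norm_num)
    nlinarith [hs, h2pos]
  have hsq : 1 + Real.sin θ = (Real.cos (θ/2) + Real.sin (θ/2))^2 := by
    have hd := Real.sin_two_mul (θ/2)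
    rw [show 2*(θ/2) = θ by ring] at hd
    have hp := Real.sin_sq_add_cos_sq (θ/2)
    nlinarith [hd, hp]
  rw [hsq, Real.sqrt_sq hnn]

lemma sqrt_one_sub_sin' (θ : ℝ) (h : θ ∈ Set.Icc (-(π/2)) (π/2)) :
    Real.sqrt (1 - Real.sin θ) = Real.cos (θ/2) - Real.sin (θ/2) := by
  have := sqrt_one_add_sin' (-θ) ⟨by linarith [h.2], by linarith [h.1]⟩
  rw [Real.sin_neg, show -θ/2 = -(θ/2) by ring, Real.sin_neg, Real.cos_neg] at this
  rw [show (1:ℝ) - Real.sin θ = 1 + -Real.sin θ by ring, this]; ring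

/-- Equivalence of the two closed-form conditions characterizing the quantum set. -/
theorem sqrt_ineq_iff_arcsin_ineq (E₁ E₂ ω₁ ω₂ : ℝ)
    (hE₁ : E₁ ∈ Set.Icc (-1 : ℝ) 1) (hE₂ : E₂ ∈ Set.Icc (-1 : ℝ) 1)
    (hω₁ : ω₁ ∈ Set.Icc (0 : ℝ) 1) (hω₂ : ω₂ ∈ Set.Icc (0 : ℝ) 1) :
    Real.sqrt (1 - ω₁) * Real.sqrt (1 - ω₂) -
        Real.sqrt ω₁ * Real.sqrt ω₂ ≤
      (Real.sqrt (1 + E₁) * Real.sqrt (1 + E₂) +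
        Real.sqrt (1 - E₁) * Real.sqrt (1 - E₂)) / 2 ↔
    |Real.arcsin E₁ - Real.arcsin E₂| ≤
      2 * (Real.arcsin (Real.sqrt ω₁) + Real.arcsin (Real.sqrt ω₂)) := by
  have hpi := Real.pi_pos
  set θ₁ := Real.arcsin E₁ with hθ₁def
  set θ₂ := Real.arcsin E₂ with hθ₂def
  set α₁ := Real.arcsin (Real.sqrt ω₁) with hα₁def
  set α₂ := Real.arcsin (Real.sqrt ω₂) with hα₂def
  have hθ₁ : θ₁ ∈ Set.Icc (-(π/2)) (π/2) := ⟨Real.neg_pi_div_two_le_arcsin E₁, Real.arcsin_le_pi_div_two E₁⟩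
  have hθ₂ : θ₂ ∈ Set.Icc (-(π/2)) (π/2) := ⟨Real.neg_pi_div_two_le_arcsin E₂, Real.arcsin_le_pi_div_two E₂⟩
  have hE₁' : E₁ = Real.sin θ₁ := (Real.sin_arcsin hE₁.1 hE₁.2).symm
  have hE₂' : E₂ = Real.sin θ₂ := (Real.sin_arcsin hE₂.1 hE₂.2).symm
  -- rewrite E-sqrts
  rw [hE₁', hE₂', sqrt_one_add_sin' θ₁ hθ₁, sqrt_one_add_sin' θ₂ hθ₂,
      sqrt_one_sub_sin' θ₁ hθ₁, sqrt_one_sub_sin' θ₂ hθ₂]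
  -- ω-sqrts
  have hs₁ : Real.sqrt ω₁ ≤ 1 := Real.sqrt_le_one.mpr hω₁.2
  have hs₂ : Real.sqrt ω₂ ≤ 1 := Real.sqrt_le_one.mpr hω₂.2
  have hcos₁ : Real.cos α₁ = Real.sqrt (1 - ω₁) := by
    rw [hα₁def, Real.cos_arcsin, Real.sq_sqrt hω₁.1]
  have hcos₂ : Real.cos α₂ = Real.sqrt (1 - ω₂) := by
    rw [hα₂def, Real.cos_arcsin, Real.sq_sqrt hω₂.1]
  have hsin₁ : Real.sin α₁ = Real.sqrt ω₁ :=
    Real.sin_arcsin (by linarith [Real.sqrt_nonneg ω₁]) hs₁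
  have hsin₂ : Real.sin α₂ = Real.sqrt ω₂ :=
    Real.sin_arcsin (by linarith [Real.sqrt_nonneg ω₂]) hs₂
  have hL : Real.sqrt (1 - ω₁) * Real.sqrt (1 - ω₂) - Real.sqrt ω₁ * Real.sqrt ω₂
      = Real.cos (α₁ + α₂) := by
    rw [Real.cos_add, hcos₁, hcos₂, hsin₁, hsin₂]
  have hR : ((Real.cos (θ₁/2) + Real.sin (θ₁/2)) * (Real.cos (θ₂/2) + Real.sin (θ₂/2)) +
      (Real.cos (θ₁/2) - Real.sin (θ₁/2)) * (Real.cos (θ₂/2) - Real.sin (θ₂/2))) / 2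
      = Real.cos (θ₁/2 - θ₂/2) := by
    rw [Real.cos_sub]; ring
  rw [hL, hR]
  have hd : Real.cos (θ₁/2 - θ₂/2) = Real.cos (|θ₁ - θ₂|/2) := by
    rw [← Real.cos_abs (θ₁/2 - θ₂/2), show θ₁/2 - θ₂/2 = (θ₁ - θ₂)/2 by ring,
        abs_div, abs_of_nonneg (by norm_num : (0:ℝ) ≤ 2)]
  rw [hd]
  have hα₁m : α₁ ∈ Set.Icc 0 (π/2) := ⟨Real.arcsin_nonneg.mpr (Real.sqrt_nonneg _), Real.arcsin_le_pi_div_two _⟩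
  have hα₂m : α₂ ∈ Set.Icc 0 (π/2) := ⟨Real.arcsin_nonneg.mpr (Real.sqrt_nonneg _), Real.arcsin_le_pi_div_two _⟩
  have habs : |θ₁ - θ₂| ≤ π := by
    rw [abs_sub_le_iff]; constructor <;> linarith [hθ₁.1, hθ₁.2, hθ₂.1, hθ₂.2]
  have hmem1 : α₁ + α₂ ∈ Set.Icc 0 π := ⟨by linarith [hα₁m.1, hα₂m.1], by linarith [hα₁m.2, hα₂m.2]⟩
  have hmem2 : |θ₁ - θ₂|/2 ∈ Set.Icc 0 π := ⟨by positivity, by linarith⟩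
  rw [Real.strictAntiOn_cos.le_iff_ge hmem1 hmem2]
  constructor <;> intro h <;> linarith
end

section
/- Let p be a probability distribution on {1,2} with p(x) > 0 for x = 1,2, let ω_pk ∈ ℝ² with 0 ≤ ω_pk ≤ (1,1) componentwise, let (α,β,γ) be a Trade-off Function with max-peak energies ω_pk for input distribution p, and let (E,ω) ∈ Q_{ω_pk}. Define ξ(a,x) = (αₓ + aβₓ)/p(x) and T(a,x) = ξ(a,x) + γ·ω + log₂((1+aEₓ)/2). Set ξ⁺ = max_{a,x} ξ(a,x), ξ⁻ = min_{a,x} ξ(a,x), γ̄ = γ₁+γ₂, and V = max{(ξ⁺+γ̄)², (ξ⁻+γ̄)²} + 2·max{−(ξ⁻+γ̄), 0} + (8/e²)·(log₂ e)². Then ∑_{x=1,2} ∑_{a=±1} p(x)·((1+aEₓ)/2)·T(a,x)² ≤ V (with 0·(log₂0)² = 0 and 0·log₂0 = 0), and T(a,x) ≤ ξ⁺ for every a, x with (1+aEₓ)/2 > 0. -/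
open scoped ComplexOrder

noncomputable section

/-- The quantum set with max-peak energy constraint `ω ≤ ω_pk`. -/
def QuantumSetPk (ωpk : Fin 2 → ℝ) : Set ((Fin 2 → ℝ) × (Fin 2 → ℝ)) :=
  {b | b ∈ QuantumSet ∧ ∀ x, b.2 x ≤ ωpk x}

/-- The conditional Shannon entropy `H(E)` of the output given the input,
for input distribution `p` (with the convention `0 · log₂ 0 = 0`). -/
def Hent (p E : Fin 2 → ℝ) : ℝ :=
  -∑ x, p x * (((1 + E x) / 2) * Real.logb 2 ((1 + E x) / 2) +
               ((1 - E x) / 2) * Real.logb 2 ((1 - E x) / 2))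
/-- A Trade-off Function with max-peak energies `ωpk` for input distribution `p`:
a linear lower bound on the conditional Shannon entropy over `Q_{ω_pk}`. -/
def IsTF (p ωpk α β γ : Fin 2 → ℝ) : Prop :=
  (∀ x, γ x ≤ 0) ∧
  ∀ E ω : Fin 2 → ℝ, (E, ω) ∈ QuantumSetPk ωpk →
    (α 0 + α 1) + (∑ x, β x * E x) + (∑ x, γ x * ω x) ≤ Hent p E

/-- The unbiased estimator `ξ(a, x) = (αₓ + a βₓ) / p(x)`. -/
def xiFun (p α β : Fin 2 → ℝ) (a : ℝ) (x : Fin 2) : ℝ :=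
  (α x + a * β x) / p x

/-- `ξ⁺ = max_{a,x} ξ(a,x)`. -/
def xiPlus (p α β : Fin 2 → ℝ) : ℝ :=
  max (max (xiFun p α β 1 0) (xiFun p α β 1 1))
      (max (xiFun p α β (-1) 0) (xiFun p α β (-1) 1))

/-- `ξ⁻ = min_{a,x} ξ(a,x)`. -/
def xiMinus (p α β : Fin 2 → ℝ) : ℝ :=
  min (min (xiFun p α β 1 0) (xiFun p α β 1 1))
      (min (xiFun p α β (-1) 0) (xiFun p α β (-1) 1))

/-- The variance bound
`V = max{(ξ⁺+γ̄)², (ξ⁻+γ̄)²} + 2 max{−(ξ⁻+γ̄), 0} + (8/e²)(log₂ e)²`. -/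
def Vbound (p α β γ : Fin 2 → ℝ) : ℝ :=
  max ((xiPlus p α β + (γ 0 + γ 1)) ^ 2) ((xiMinus p α β + (γ 0 + γ 1)) ^ 2) +
    2 * max (-(xiMinus p α β + (γ 0 + γ 1))) 0 +
    (8 / Real.exp 1 ^ 2) * Real.logb 2 (Real.exp 1) ^ 2

/-- The finite-statistics error term
`t = √(2V)·√(log₂(1/ε_t)/n) + (ξ⁺/3)·(log₂(1/ε_t)/n)`. -/
def tErr (p α β γ : Fin 2 → ℝ) (εt : ℝ) (n : ℕ) : ℝ :=
  Real.sqrt (2 * Vbound p α β γ) * Real.sqrt (Real.logb 2 (1 / εt) / n) +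
    (xiPlus p α β / 3) * (Real.logb 2 (1 / εt) / n)

/-! ### Auxiliary lemmas -/

section AuxLemmas
open Matrix

lemma psd_trace_nonneg {d : ℕ} {A : Matrix (Fin d) (Fin d) ℂ} (hA : A.PosSemidef) :
    0 ≤ A.trace := by
  rw [Matrix.trace]
  refine Finset.sum_nonneg fun i _ => ?_
  have h := hA.dotProduct_mulVec_nonneg (Pi.single i 1)
  have hs : star (Pi.single i 1 : Fin d → ℂ) = Pi.single i 1 := by
    ext j; by_cases hj : j = i <;> simp [Pi.single_apply, hj]
  rw [hs, Matrix.mulVec_single, single_dotProduct] at h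
  simpa [Matrix.diag] using h

lemma psd_trace_mul_nonneg {d : ℕ} {A B : Matrix (Fin d) (Fin d) ℂ}
    (hA : A.PosSemidef) (hB : B.PosSemidef) : 0 ≤ (A * B).trace := by
  classical
  open scoped MatrixOrder in
  obtain ⟨X, rfl⟩ := CStarAlgebra.nonneg_iff_eq_star_mul_self.mp hA.nonneg
  have h2 : (star X * X * B).trace = (X * B * Xᴴ).trace := by
    rw [Matrix.star_eq_conjTranspose, Matrix.mul_assoc, Matrix.trace_mul_comm]
  rw [h2]
  exact psd_trace_nonneg (hB.mul_mul_conjTranspose_same X)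

lemma one_sub_vvstar_psd {d : ℕ} {v : Fin d → ℂ} (hv : (∑ i, Complex.normSq (v i)) = 1) :
    (1 - Matrix.vecMulVec v (star v)).PosSemidef := by
  refine Matrix.PosSemidef.of_dotProduct_mulVec_nonneg ?_ ?_
  · have h1 : (Matrix.vecMulVec v (star v)).IsHermitian := by
      ext i j
      simp [Matrix.conjTranspose_apply, Matrix.vecMulVec_apply, mul_comm]
    exact Matrix.isHermitian_one.sub h1
  · intro x
    set c : ℂ := ∑ i, star (v i) * x i with hc
    have hxv : ∑ i, star (x i) * v i = star c := by
      rw [hc, star_sum]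
      exact Finset.sum_congr rfl fun i _ => by simp [mul_comm]
    have hvv : ∑ i, star (v i) * v i = 1 := by
      have h2 : ∀ i, star (v i) * v i = (Complex.normSq (v i) : ℂ) := fun i => by
        simp [Complex.star_def, mul_comm, Complex.mul_conj]
      rw [Finset.sum_congr rfl fun i _ => h2 i, ← Complex.ofReal_sum, hv, Complex.ofReal_one]
    have key : ∑ i, star (x i - c * v i) * (x i - c * v i)
        = (∑ i, star (x i) * x i) - star c * c := by
      have e1 : ∀ i, star (x i - c * v i) * (x i - c * v i)
          = star (x i) * x i - c * (star (x i) * v i) - star c * (star (v i) * x i)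
            + (star c * c) * (star (v i) * v i) := by
        intro i; simp only [star_sub, star_mul']; ring
      rw [Finset.sum_congr rfl fun i _ => e1 i]
      rw [Finset.sum_add_distrib, Finset.sum_sub_distrib, Finset.sum_sub_distrib,
        ← Finset.mul_sum, ← Finset.mul_sum, ← Finset.mul_sum, hxv, ← hc, hvv]
      ring
    have hnn : 0 ≤ (∑ i, star (x i) * x i) - star c * c := by
      rw [← key]
      exact Finset.sum_nonneg fun i _ => star_mul_self_nonneg _
    have hxx : star x ⬝ᵥ x = ∑ i, star (x i) * x i := by
      simp [dotProduct]
    have hMx : star x ⬝ᵥ (Matrix.vecMulVec v (star v) *ᵥ x) = star c * c := by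
      calc star x ⬝ᵥ (Matrix.vecMulVec v (star v) *ᵥ x)
          = ∑ i, ∑ j, (star (x i) * v i) * (star (v j) * x j) := by
            simp only [dotProduct, Matrix.mulVec, Matrix.vecMulVec_apply,
              Finset.mul_sum, Pi.star_apply]
            exact Finset.sum_congr rfl fun i _ => Finset.sum_congr rfl fun j _ => by ring
        _ = (∑ i, star (x i) * v i) * (∑ j, star (v j) * x j) :=
            (Finset.sum_mul_sum _ _ _ _).symm
        _ = star c * c := by rw [hxv, ← hc]
    rw [Matrix.sub_mulVec, dotProduct_sub, Matrix.one_mulVec, hxx, hMx]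
    exact hnn

lemma isQuantumRep_bounds {E ω : Fin 2 → ℝ} (h : IsQuantumRep E ω) :
    ∀ x, (-1 ≤ E x ∧ E x ≤ 1) ∧ 0 ≤ ω x := by
  obtain ⟨d, ρ, M, O, v, hρ, hτ, hM, h1M, h1M', hOh, hOv, hv, hOsub, hE, hω⟩ := h
  have hOpsd : O.PosSemidef := by
    have hproj := one_sub_vvstar_psd hv
    have he : O = (O - (1 - Matrix.vecMulVec v (star v)))
        + (1 - Matrix.vecMulVec v (star v)) := by rw [sub_add_cancel]
    rw [he]; exact hOsub.add hproj
  intro x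
  have h1 : 0 ≤ (ρ x * (1 - M)).trace := psd_trace_mul_nonneg (hρ x) h1M
  have h2 : 0 ≤ (ρ x * (1 + M)).trace := psd_trace_mul_nonneg (hρ x) h1M'
  have e1 : (ρ x * (1 - M)).trace = 1 - (E x : ℂ) := by
    rw [Matrix.mul_sub, Matrix.trace_sub, Matrix.mul_one, hτ x, hE x]
  have e2 : (ρ x * (1 + M)).trace = 1 + (E x : ℂ) := by
    rw [Matrix.mul_add, Matrix.trace_add, Matrix.mul_one, hτ x, hE x]
  rw [e1] at h1; rw [e2] at h2
  have hr1 := (Complex.le_def.mp h1).1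
  have hr2 := (Complex.le_def.mp h2).1
  simp only [Complex.zero_re, Complex.sub_re, Complex.add_re, Complex.one_re,
    Complex.ofReal_re] at hr1 hr2
  have h3 : 0 ≤ (ρ x * O).trace := psd_trace_mul_nonneg (hρ x) hOpsd
  have hr3 := (Complex.le_def.mp h3).1
  simp only [Complex.zero_re] at hr3
  exact ⟨⟨by linarith, by linarith⟩, le_trans hr3 (hω x)⟩

lemma quantumSet_bounds {b : (Fin 2 → ℝ) × (Fin 2 → ℝ)} (hb : b ∈ QuantumSet) :
    ∀ x, (-1 ≤ b.1 x ∧ b.1 x ≤ 1) ∧ 0 ≤ b.2 x := by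
  have hK : Convex ℝ {b : (Fin 2 → ℝ) × (Fin 2 → ℝ) |
      ∀ x, (-1 ≤ b.1 x ∧ b.1 x ≤ 1) ∧ 0 ≤ b.2 x} := by
    intro u hu w hw a c ha hc hac x
    have h1 := hu x; have h2 := hw x
    have e1 : (a • u + c • w).1 x = a * u.1 x + c * w.1 x := rfl
    have e2 : (a • u + c • w).2 x = a * u.2 x + c * w.2 x := rfl
    refine ⟨⟨?_, ?_⟩, ?_⟩
    · rw [e1]
      nlinarith [mul_nonneg ha (by linarith [h1.1.1] : (0:ℝ) ≤ u.1 x + 1),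
        mul_nonneg hc (by linarith [h2.1.1] : (0:ℝ) ≤ w.1 x + 1)]
    · rw [e1]
      nlinarith [mul_nonneg ha (by linarith [h1.1.2] : (0:ℝ) ≤ 1 - u.1 x),
        mul_nonneg hc (by linarith [h2.1.2] : (0:ℝ) ≤ 1 - w.1 x)]
    · rw [e2]
      nlinarith [mul_nonneg ha h1.2, mul_nonneg hc h2.2]
  exact convexHull_min (fun b hb => isQuantumRep_bounds hb) hK hb

lemma q_logb_sq_le {q : ℝ} (h0 : 0 ≤ q) (h1 : q ≤ 1) :
    q * Real.logb 2 q ^ 2 ≤ 4 / Real.exp 1 ^ 2 * Real.logb 2 (Real.exp 1) ^ 2 := by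
  rcases eq_or_lt_of_le h0 with h|hq
  · rw [← h, zero_mul]; positivity
  · have hln : q * Real.log q ^ 2 ≤ 4 / Real.exp 1 ^ 2 := by
      set t := -Real.log q with ht
      have htn : 0 ≤ t := by
        rw [ht, neg_nonneg]; exact Real.log_nonpos h0 h1
      have hq' : q = Real.exp (-t) := by rw [ht, neg_neg, Real.exp_log hq]
      have key : t/2 ≤ Real.exp (t/2 - 1) := by
        have := Real.add_one_le_exp (t/2 - 1); linarith
      have key2 : (t/2)^2 ≤ Real.exp (t/2 - 1)^2 := by
        nlinarith [Real.exp_pos (t/2 - 1)]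
      have e2 : Real.exp (t/2 - 1)^2 = Real.exp (t - 2) := by
        rw [sq, ← Real.exp_add]; ring_nf
      have e3 : q * Real.log q ^ 2 = Real.exp (-t) * t^2 := by
        rw [hq', Real.log_exp]; ring
      have h4 : t^2 ≤ 4 * Real.exp (t - 2) := by nlinarith [key2, e2]
      have h5 : Real.exp (-t) * t^2 ≤ Real.exp (-t) * (4 * Real.exp (t - 2)) :=
        mul_le_mul_of_nonneg_left h4 (Real.exp_pos (-t)).le
      have h6 : Real.exp (-t) * (4 * Real.exp (t - 2)) = 4 / Real.exp 1 ^ 2 := by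
        have ha : Real.exp (-t) * (4 * Real.exp (t - 2)) = 4 * Real.exp ((-t) + (t-2)) := by
          rw [Real.exp_add]; ring
        have hb : (-t) + (t - 2) = -2 := by ring
        have hcc : Real.exp (2:ℝ) = Real.exp 1 ^ 2 := by
          rw [← Real.exp_nat_mul]; norm_num
        rw [ha, hb, Real.exp_neg, hcc]
        rw [div_eq_mul_inv]
      rw [e3]; rw [h6] at h5; exact h5
    have hlog2 : (0:ℝ) < Real.log 2 := Real.log_pos (by norm_num)
    have hlb : Real.logb 2 q ^ 2 = Real.log q ^ 2 / Real.log 2 ^ 2 := by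
      rw [Real.logb]; ring
    have hle : Real.logb 2 (Real.exp 1) = 1 / Real.log 2 := by
      rw [Real.logb, Real.log_exp]
    rw [hlb, hle]
    have e7 : q * (Real.log q ^2 / Real.log 2 ^2) = (q * Real.log q^2) / Real.log 2^2 := by
      ring
    have e8 : 4 / Real.exp 1 ^2 * (1/Real.log 2)^2 = (4 / Real.exp 1^2) / Real.log 2^2 := by
      ring
    rw [e7, e8]
    exact div_le_div_of_nonneg_right hln (by positivity)

lemma binent_le_one (q : ℝ) :
    -(q * Real.logb 2 q + (1-q) * Real.logb 2 (1-q)) ≤ 1 := by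
  have h := Real.binEntropy_le_log_two (p := q)
  rw [Real.binEntropy] at h
  simp only [Real.log_inv] at h
  have hlog2 : (0:ℝ) < Real.log 2 := Real.log_pos (by norm_num)
  simp only [Real.logb]
  have e : -(q * (Real.log q/Real.log 2) + (1-q) * (Real.log (1-q)/Real.log 2))
      = (-(q * Real.log q + (1-q) * Real.log (1-q)))/Real.log 2 := by ring
  rw [e, div_le_one hlog2]
  linarith

lemma sq_le_max {m M A : ℝ} (h1 : m ≤ A) (h2 : A ≤ M) : A^2 ≤ max (M^2) (m^2) := by
  rcases le_total 0 A with h|h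
  · exact le_max_of_le_left (by nlinarith)
  · exact le_max_of_le_right (by nlinarith)

lemma key0 (SA s Q2 QL2 QAL δ m Mp K : ℝ)
    (hQ2 : Q2 ≤ max (Mp^2) (m^2)) (hQL2 : QL2 ≤ K) (hQAL : QAL ≤ m * s)
    (hδ : 0 ≤ δ) (hTF : SA + δ + s ≤ 0) (hs0 : s ≤ 0) (hs1 : -s ≤ 1) :
    Q2 + δ^2 + QL2 + 2*δ*SA + 2*QAL + 2*δ*s
      ≤ max (Mp^2) (m^2) + 2*max (-m) 0 + K := by
  have h1 : δ^2 + 2*δ*SA + 2*δ*s ≤ 0 := by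
    nlinarith [mul_nonneg hδ (by linarith : (0:ℝ) ≤ -δ - SA - s)]
  have h2 : m * s ≤ max (-m) 0 := by
    rcases le_total 0 m with h|h
    · exact (mul_nonpos_of_nonneg_of_nonpos h hs0).trans (le_max_right _ _)
    · nlinarith [le_max_left (-m) (0:ℝ)]
  linarith

end AuxLemmas

set_option maxHeartbeats 2000000 in
/-- Lemma 4: variance and upper bounds on the random variable
`T(a,x) = ξ(a,x) + γ·ω + log₂ p(a|x)`. -/
theorem variance_and_sup_T_bound (p ωpk α β γ E ω : Fin 2 → ℝ)
    (hp : ∀ x, 0 < p x) (hpsum : p 0 + p 1 = 1)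
    (hpk0 : ∀ x, 0 ≤ ωpk x) (hpk1 : ∀ x, ωpk x ≤ 1)
    (hTF : IsTF p ωpk α β γ)
    (hQ : (E, ω) ∈ QuantumSetPk ωpk) :
    (∑ x, p x *
        (((1 + E x) / 2) *
            (xiFun p α β 1 x + (∑ y, γ y * ω y) + Real.logb 2 ((1 + E x) / 2)) ^ 2 +
          ((1 - E x) / 2) *
            (xiFun p α β (-1) x + (∑ y, γ y * ω y) + Real.logb 2 ((1 - E x) / 2)) ^ 2) ≤
      Vbound p α β γ) ∧
    (∀ a : ℝ, (a = 1 ∨ a = -1) → ∀ x : Fin 2, 0 < (1 + a * E x) / 2 →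
      xiFun p α β a x + (∑ y, γ y * ω y) + Real.logb 2 ((1 + a * E x) / 2) ≤
        xiPlus p α β) := by
  obtain ⟨hQS, hωpk⟩ := hQ
  have hbs := quantumSet_bounds hQS
  have hp0 := hp 0
  have hp1 := hp 1
  have hE0l : -1 ≤ E 0 := (hbs 0).1.1
  have hE0u : E 0 ≤ 1 := (hbs 0).1.2
  have hE1l : -1 ≤ E 1 := (hbs 1).1.1
  have hE1u : E 1 ≤ 1 := (hbs 1).1.2
  have hω0 : 0 ≤ ω 0 := (hbs 0).2
  have hω1 : 0 ≤ ω 1 := (hbs 1).2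
  have hω0u : ω 0 ≤ 1 := le_trans (hωpk 0) (hpk1 0)
  have hω1u : ω 1 ≤ 1 := le_trans (hωpk 1) (hpk1 1)
  have hγ0 := hTF.1 0
  have hγ1 := hTF.1 1
  -- probabilities
  have hq10 : (0:ℝ) ≤ (1 + E 0)/2 := by linarith
  have hq10' : (1 + E 0)/2 ≤ 1 := by linarith
  have hq20 : (0:ℝ) ≤ (1 - E 0)/2 := by linarith
  have hq20' : (1 - E 0)/2 ≤ 1 := by linarith
  have hq11 : (0:ℝ) ≤ (1 + E 1)/2 := by linarith
  have hq11' : (1 + E 1)/2 ≤ 1 := by linarith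
  have hq21 : (0:ℝ) ≤ (1 - E 1)/2 := by linarith
  have hq21' : (1 - E 1)/2 ≤ 1 := by linarith
  -- xi bounds
  have hP10 : xiFun p α β 1 0 ≤ xiPlus p α β :=
    le_trans (le_max_left _ _) (le_max_left _ _)
  have hP11 : xiFun p α β 1 1 ≤ xiPlus p α β :=
    le_trans (le_max_right _ _) (le_max_left _ _)
  have hP20 : xiFun p α β (-1) 0 ≤ xiPlus p α β :=
    le_trans (le_max_left _ _) (le_max_right _ _)
  have hP21 : xiFun p α β (-1) 1 ≤ xiPlus p α β :=
    le_trans (le_max_right _ _) (le_max_right _ _)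
  have hm10 : xiMinus p α β ≤ xiFun p α β 1 0 :=
    le_trans (min_le_left _ _) (min_le_left _ _)
  have hm11 : xiMinus p α β ≤ xiFun p α β 1 1 :=
    le_trans (min_le_left _ _) (min_le_right _ _)
  have hm20 : xiMinus p α β ≤ xiFun p α β (-1) 0 :=
    le_trans (min_le_right _ _) (min_le_left _ _)
  have hm21 : xiMinus p α β ≤ xiFun p α β (-1) 1 :=
    le_trans (min_le_right _ _) (min_le_right _ _)
  -- log bounds
  have hL10 : Real.logb 2 ((1 + E 0)/2) ≤ 0 :=
    Real.logb_nonpos (by norm_num) hq10 hq10'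
  have hL20 : Real.logb 2 ((1 - E 0)/2) ≤ 0 :=
    Real.logb_nonpos (by norm_num) hq20 hq20'
  have hL11 : Real.logb 2 ((1 + E 1)/2) ≤ 0 :=
    Real.logb_nonpos (by norm_num) hq11 hq11'
  have hL21 : Real.logb 2 ((1 - E 1)/2) ≤ 0 :=
    Real.logb_nonpos (by norm_num) hq21 hq21'
  -- delta nonneg
  have hδ : 0 ≤ (γ 0 * ω 0 + γ 1 * ω 1) - (γ 0 + γ 1) := by
    nlinarith [mul_nonneg (neg_nonneg.2 hγ0) (by linarith : (0:ℝ) ≤ 1 - ω 0),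
      mul_nonneg (neg_nonneg.2 hγ1) (by linarith : (0:ℝ) ≤ 1 - ω 1)]
  -- weights
  have hw1 : 0 ≤ p 0 * ((1 + E 0)/2) := mul_nonneg hp0.le hq10
  have hw2 : 0 ≤ p 0 * ((1 - E 0)/2) := mul_nonneg hp0.le hq20
  have hw3 : 0 ≤ p 1 * ((1 + E 1)/2) := mul_nonneg hp1.le hq11
  have hw4 : 0 ≤ p 1 * ((1 - E 1)/2) := mul_nonneg hp1.le hq21
  have hsum : p 0 * ((1 + E 0)/2) + p 0 * ((1 - E 0)/2)
      + p 1 * ((1 + E 1)/2) + p 1 * ((1 - E 1)/2) = 1 := by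
    linear_combination hpsum
  -- xi identities
  have hxi0 : p 0 * (((1 + E 0)/2) * xiFun p α β 1 0 + ((1 - E 0)/2) * xiFun p α β (-1) 0)
      = α 0 + β 0 * E 0 := by
    simp only [xiFun]
    field_simp
    ring
  have hxi1 : p 1 * (((1 + E 1)/2) * xiFun p α β 1 1 + ((1 - E 1)/2) * xiFun p α β (-1) 1)
      = α 1 + β 1 * E 1 := by
    simp only [xiFun]
    field_simp
    ring
  -- TF inequality
  have htf := hTF.2 E ω ⟨hQS, hωpk⟩
  simp only [Hent, Fin.sum_univ_two] at htf
  -- entropy per input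
  have hent0 : -(((1 + E 0)/2) * Real.logb 2 ((1 + E 0)/2)
      + ((1 - E 0)/2) * Real.logb 2 ((1 - E 0)/2)) ≤ 1 := by
    have h := binent_le_one ((1 + E 0)/2)
    have e : 1 - (1 + E 0)/2 = (1 - E 0)/2 := by ring
    rw [e] at h; exact h
  have hent1 : -(((1 + E 1)/2) * Real.logb 2 ((1 + E 1)/2)
      + ((1 - E 1)/2) * Real.logb 2 ((1 - E 1)/2)) ≤ 1 := by
    have h := binent_le_one ((1 + E 1)/2)
    have e : 1 - (1 + E 1)/2 = (1 - E 1)/2 := by ring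
    rw [e] at h; exact h
  -- q log^2 bounds
  have hql10 := q_logb_sq_le hq10 hq10'
  have hql20 := q_logb_sq_le hq20 hq20'
  have hql11 := q_logb_sq_le hq11 hq11'
  have hql21 := q_logb_sq_le hq21 hq21'
  constructor
  · -- the variance bound
    -- abbreviations (as plain expressions)
    have hsq1 : (xiFun p α β 1 0 + (γ 0 + γ 1))^2
        ≤ max ((xiPlus p α β + (γ 0 + γ 1))^2) ((xiMinus p α β + (γ 0 + γ 1))^2) :=
      sq_le_max (add_le_add_left hm10 _) (add_le_add_left hP10 _)
    have hsq2 : (xiFun p α β (-1) 0 + (γ 0 + γ 1))^2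
        ≤ max ((xiPlus p α β + (γ 0 + γ 1))^2) ((xiMinus p α β + (γ 0 + γ 1))^2) :=
      sq_le_max (add_le_add_left hm20 _) (add_le_add_left hP20 _)
    have hsq3 : (xiFun p α β 1 1 + (γ 0 + γ 1))^2
        ≤ max ((xiPlus p α β + (γ 0 + γ 1))^2) ((xiMinus p α β + (γ 0 + γ 1))^2) :=
      sq_le_max (add_le_add_left hm11 _) (add_le_add_left hP11 _)
    have hsq4 : (xiFun p α β (-1) 1 + (γ 0 + γ 1))^2
        ≤ max ((xiPlus p α β + (γ 0 + γ 1))^2) ((xiMinus p α β + (γ 0 + γ 1))^2) :=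
      sq_le_max (add_le_add_left hm21 _) (add_le_add_left hP21 _)
    have t1 := mul_le_mul_of_nonneg_left hsq1 hw1
    have t2 := mul_le_mul_of_nonneg_left hsq2 hw2
    have t3 := mul_le_mul_of_nonneg_left hsq3 hw3
    have t4 := mul_le_mul_of_nonneg_left hsq4 hw4
    have tsum : p 0 * ((1 + E 0)/2)
          * (max ((xiPlus p α β + (γ 0 + γ 1))^2) ((xiMinus p α β + (γ 0 + γ 1))^2))
        + p 0 * ((1 - E 0)/2)
          * (max ((xiPlus p α β + (γ 0 + γ 1))^2) ((xiMinus p α β + (γ 0 + γ 1))^2))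
        + p 1 * ((1 + E 1)/2)
          * (max ((xiPlus p α β + (γ 0 + γ 1))^2) ((xiMinus p α β + (γ 0 + γ 1))^2))
        + p 1 * ((1 - E 1)/2)
          * (max ((xiPlus p α β + (γ 0 + γ 1))^2) ((xiMinus p α β + (γ 0 + γ 1))^2))
        = max ((xiPlus p α β + (γ 0 + γ 1))^2) ((xiMinus p α β + (γ 0 + γ 1))^2) := by
      linear_combination (max ((xiPlus p α β + (γ 0 + γ 1))^2)
        ((xiMinus p α β + (γ 0 + γ 1))^2)) * hsum
    have hQ2 : p 0 * ((1 + E 0)/2) * (xiFun p α β 1 0 + (γ 0 + γ 1))^2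
        + p 0 * ((1 - E 0)/2) * (xiFun p α β (-1) 0 + (γ 0 + γ 1))^2
        + p 1 * ((1 + E 1)/2) * (xiFun p α β 1 1 + (γ 0 + γ 1))^2
        + p 1 * ((1 - E 1)/2) * (xiFun p α β (-1) 1 + (γ 0 + γ 1))^2
        ≤ max ((xiPlus p α β + (γ 0 + γ 1))^2) ((xiMinus p α β + (γ 0 + γ 1))^2) := by
      linarith
    -- QAL bound
    have u1 : p 0 * ((1 + E 0)/2) * ((xiFun p α β 1 0 + (γ 0 + γ 1)) * Real.logb 2 ((1 + E 0)/2))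
        ≤ p 0 * ((1 + E 0)/2) * ((xiMinus p α β + (γ 0 + γ 1)) * Real.logb 2 ((1 + E 0)/2)) := by
      exact mul_le_mul_of_nonneg_left
        (mul_le_mul_of_nonpos_right (add_le_add_left hm10 (γ 0 + γ 1)) hL10) hw1
    have u2 : p 0 * ((1 - E 0)/2) * ((xiFun p α β (-1) 0 + (γ 0 + γ 1)) * Real.logb 2 ((1 - E 0)/2))
        ≤ p 0 * ((1 - E 0)/2) * ((xiMinus p α β + (γ 0 + γ 1)) * Real.logb 2 ((1 - E 0)/2)) := by
      exact mul_le_mul_of_nonneg_left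
        (mul_le_mul_of_nonpos_right (add_le_add_left hm20 (γ 0 + γ 1)) hL20) hw2
    have u3 : p 1 * ((1 + E 1)/2) * ((xiFun p α β 1 1 + (γ 0 + γ 1)) * Real.logb 2 ((1 + E 1)/2))
        ≤ p 1 * ((1 + E 1)/2) * ((xiMinus p α β + (γ 0 + γ 1)) * Real.logb 2 ((1 + E 1)/2)) := by
      exact mul_le_mul_of_nonneg_left
        (mul_le_mul_of_nonpos_right (add_le_add_left hm11 (γ 0 + γ 1)) hL11) hw3
    have u4 : p 1 * ((1 - E 1)/2) * ((xiFun p α β (-1) 1 + (γ 0 + γ 1)) * Real.logb 2 ((1 - E 1)/2))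
        ≤ p 1 * ((1 - E 1)/2) * ((xiMinus p α β + (γ 0 + γ 1)) * Real.logb 2 ((1 - E 1)/2)) := by
      exact mul_le_mul_of_nonneg_left
        (mul_le_mul_of_nonpos_right (add_le_add_left hm21 (γ 0 + γ 1)) hL21) hw4
    have hQAL : p 0 * ((1 + E 0)/2) * ((xiFun p α β 1 0 + (γ 0 + γ 1)) * Real.logb 2 ((1 + E 0)/2))
        + p 0 * ((1 - E 0)/2) * ((xiFun p α β (-1) 0 + (γ 0 + γ 1)) * Real.logb 2 ((1 - E 0)/2))
        + p 1 * ((1 + E 1)/2) * ((xiFun p α β 1 1 + (γ 0 + γ 1)) * Real.logb 2 ((1 + E 1)/2))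
        + p 1 * ((1 - E 1)/2) * ((xiFun p α β (-1) 1 + (γ 0 + γ 1)) * Real.logb 2 ((1 - E 1)/2))
        ≤ (xiMinus p α β + (γ 0 + γ 1)) *
          (p 0 * ((1 + E 0)/2) * Real.logb 2 ((1 + E 0)/2)
          + p 0 * ((1 - E 0)/2) * Real.logb 2 ((1 - E 0)/2)
          + p 1 * ((1 + E 1)/2) * Real.logb 2 ((1 + E 1)/2)
          + p 1 * ((1 - E 1)/2) * Real.logb 2 ((1 - E 1)/2)) := by
      linarith
    -- s bounds
    have hs0 : p 0 * ((1 + E 0)/2) * Real.logb 2 ((1 + E 0)/2)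
        + p 0 * ((1 - E 0)/2) * Real.logb 2 ((1 - E 0)/2)
        + p 1 * ((1 + E 1)/2) * Real.logb 2 ((1 + E 1)/2)
        + p 1 * ((1 - E 1)/2) * Real.logb 2 ((1 - E 1)/2) ≤ 0 := by
      have := mul_nonpos_of_nonneg_of_nonpos hw1 hL10
      have := mul_nonpos_of_nonneg_of_nonpos hw2 hL20
      have := mul_nonpos_of_nonneg_of_nonpos hw3 hL11
      have := mul_nonpos_of_nonneg_of_nonpos hw4 hL21
      linarith
    have hs1 : -(p 0 * ((1 + E 0)/2) * Real.logb 2 ((1 + E 0)/2)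
        + p 0 * ((1 - E 0)/2) * Real.logb 2 ((1 - E 0)/2)
        + p 1 * ((1 + E 1)/2) * Real.logb 2 ((1 + E 1)/2)
        + p 1 * ((1 - E 1)/2) * Real.logb 2 ((1 - E 1)/2)) ≤ 1 := by
      have v0 := mul_le_mul_of_nonneg_left hent0 hp0.le
      have v1 := mul_le_mul_of_nonneg_left hent1 hp1.le
      linarith [v0, v1, hpsum]
    -- QL2 bound
    have hb0 : ((1 + E 0)/2) * Real.logb 2 ((1 + E 0)/2)^2
        + ((1 - E 0)/2) * Real.logb 2 ((1 - E 0)/2)^2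
        ≤ 8 / Real.exp 1 ^ 2 * Real.logb 2 (Real.exp 1) ^ 2 := by
      have h48 : 8 / Real.exp 1 ^ 2 * Real.logb 2 (Real.exp 1) ^ 2
          = 4 / Real.exp 1 ^ 2 * Real.logb 2 (Real.exp 1) ^ 2
            + 4 / Real.exp 1 ^ 2 * Real.logb 2 (Real.exp 1) ^ 2 := by ring
      linarith
    have hb1 : ((1 + E 1)/2) * Real.logb 2 ((1 + E 1)/2)^2
        + ((1 - E 1)/2) * Real.logb 2 ((1 - E 1)/2)^2
        ≤ 8 / Real.exp 1 ^ 2 * Real.logb 2 (Real.exp 1) ^ 2 := by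
      have h48 : 8 / Real.exp 1 ^ 2 * Real.logb 2 (Real.exp 1) ^ 2
          = 4 / Real.exp 1 ^ 2 * Real.logb 2 (Real.exp 1) ^ 2
            + 4 / Real.exp 1 ^ 2 * Real.logb 2 (Real.exp 1) ^ 2 := by ring
      linarith
    have w0' := mul_le_mul_of_nonneg_left hb0 hp0.le
    have w1' := mul_le_mul_of_nonneg_left hb1 hp1.le
    have hKK : (p 0 + p 1) * (8 / Real.exp 1 ^ 2 * Real.logb 2 (Real.exp 1) ^ 2)
        = 8 / Real.exp 1 ^ 2 * Real.logb 2 (Real.exp 1) ^ 2 := by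
      rw [hpsum, one_mul]
    have hQL2 : p 0 * ((1 + E 0)/2) * Real.logb 2 ((1 + E 0)/2)^2
        + p 0 * ((1 - E 0)/2) * Real.logb 2 ((1 - E 0)/2)^2
        + p 1 * ((1 + E 1)/2) * Real.logb 2 ((1 + E 1)/2)^2
        + p 1 * ((1 - E 1)/2) * Real.logb 2 ((1 - E 1)/2)^2
        ≤ 8 / Real.exp 1 ^ 2 * Real.logb 2 (Real.exp 1) ^ 2 := by
      linarith [w0', w1', hKK]
    -- TF inequality in SA/s form
    have hgb : (γ 0 + γ 1) * (p 0 * ((1 + E 0)/2) + p 0 * ((1 - E 0)/2)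
        + p 1 * ((1 + E 1)/2) + p 1 * ((1 - E 1)/2)) = γ 0 + γ 1 := by
      rw [hsum, mul_one]
    have hTF' : (p 0 * ((1 + E 0)/2) * (xiFun p α β 1 0 + (γ 0 + γ 1))
        + p 0 * ((1 - E 0)/2) * (xiFun p α β (-1) 0 + (γ 0 + γ 1))
        + p 1 * ((1 + E 1)/2) * (xiFun p α β 1 1 + (γ 0 + γ 1))
        + p 1 * ((1 - E 1)/2) * (xiFun p α β (-1) 1 + (γ 0 + γ 1)))
        + ((γ 0 * ω 0 + γ 1 * ω 1) - (γ 0 + γ 1))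
        + (p 0 * ((1 + E 0)/2) * Real.logb 2 ((1 + E 0)/2)
        + p 0 * ((1 - E 0)/2) * Real.logb 2 ((1 - E 0)/2)
        + p 1 * ((1 + E 1)/2) * Real.logb 2 ((1 + E 1)/2)
        + p 1 * ((1 - E 1)/2) * Real.logb 2 ((1 - E 1)/2)) ≤ 0 := by
      linarith [htf, hxi0, hxi1, hgb]
    have res := key0
      (p 0 * ((1 + E 0)/2) * (xiFun p α β 1 0 + (γ 0 + γ 1))
        + p 0 * ((1 - E 0)/2) * (xiFun p α β (-1) 0 + (γ 0 + γ 1))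
        + p 1 * ((1 + E 1)/2) * (xiFun p α β 1 1 + (γ 0 + γ 1))
        + p 1 * ((1 - E 1)/2) * (xiFun p α β (-1) 1 + (γ 0 + γ 1)))
      (p 0 * ((1 + E 0)/2) * Real.logb 2 ((1 + E 0)/2)
        + p 0 * ((1 - E 0)/2) * Real.logb 2 ((1 - E 0)/2)
        + p 1 * ((1 + E 1)/2) * Real.logb 2 ((1 + E 1)/2)
        + p 1 * ((1 - E 1)/2) * Real.logb 2 ((1 - E 1)/2))
      (p 0 * ((1 + E 0)/2) * (xiFun p α β 1 0 + (γ 0 + γ 1))^2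
        + p 0 * ((1 - E 0)/2) * (xiFun p α β (-1) 0 + (γ 0 + γ 1))^2
        + p 1 * ((1 + E 1)/2) * (xiFun p α β 1 1 + (γ 0 + γ 1))^2
        + p 1 * ((1 - E 1)/2) * (xiFun p α β (-1) 1 + (γ 0 + γ 1))^2)
      (p 0 * ((1 + E 0)/2) * Real.logb 2 ((1 + E 0)/2)^2
        + p 0 * ((1 - E 0)/2) * Real.logb 2 ((1 - E 0)/2)^2
        + p 1 * ((1 + E 1)/2) * Real.logb 2 ((1 + E 1)/2)^2
        + p 1 * ((1 - E 1)/2) * Real.logb 2 ((1 - E 1)/2)^2)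
      (p 0 * ((1 + E 0)/2) * ((xiFun p α β 1 0 + (γ 0 + γ 1)) * Real.logb 2 ((1 + E 0)/2))
        + p 0 * ((1 - E 0)/2) * ((xiFun p α β (-1) 0 + (γ 0 + γ 1)) * Real.logb 2 ((1 - E 0)/2))
        + p 1 * ((1 + E 1)/2) * ((xiFun p α β 1 1 + (γ 0 + γ 1)) * Real.logb 2 ((1 + E 1)/2))
        + p 1 * ((1 - E 1)/2) * ((xiFun p α β (-1) 1 + (γ 0 + γ 1)) * Real.logb 2 ((1 - E 1)/2)))
      ((γ 0 * ω 0 + γ 1 * ω 1) - (γ 0 + γ 1))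
      (xiMinus p α β + (γ 0 + γ 1))
      (xiPlus p α β + (γ 0 + γ 1))
      (8 / Real.exp 1 ^ 2 * Real.logb 2 (Real.exp 1) ^ 2)
      hQ2 hQL2 (by linarith [hQAL]) hδ hTF' hs0 hs1
    simp only [Fin.sum_univ_two, Vbound]
    have hone : (((γ 0 * ω 0 + γ 1 * ω 1) - (γ 0 + γ 1)))^2
        * (p 0 * ((1 + E 0)/2) + p 0 * ((1 - E 0)/2)
          + p 1 * ((1 + E 1)/2) + p 1 * ((1 - E 1)/2))
        = (((γ 0 * ω 0 + γ 1 * ω 1) - (γ 0 + γ 1)))^2 := by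
      rw [hsum, mul_one]
    linarith [res, hone]
  · -- the sup bound
    intro a ha x hx
    simp only [Fin.sum_univ_two]
    have hgω : γ 0 * ω 0 + γ 1 * ω 1 ≤ 0 := by
      nlinarith [mul_nonpos_of_nonpos_of_nonneg hγ0 hω0,
        mul_nonpos_of_nonpos_of_nonneg hγ1 hω1]
    have hqle : (1 + a * E x)/2 ≤ 1 := by
      rcases ha with rfl|rfl <;> fin_cases x <;> simp <;> linarith
    have hL : Real.logb 2 ((1 + a * E x)/2) ≤ 0 :=
      Real.logb_nonpos (by norm_num) hx.le hqle
    have hξ : xiFun p α β a x ≤ xiPlus p α β := by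
      rcases ha with rfl|rfl <;> fin_cases x
      · exact hP10
      · exact hP11
      · exact hP20
      · exact hP21
    linarith


end
end

section
/- Let S ⊆ ℝ^d be a nonempty compact convex set, f : S → ℝ continuous, and x₀ ∈ S. Then there exists a finite family of points x^λ ∈ S and weights p(λ) ≥ 0 with ∑_λ p(λ) = 1 and ∑_λ p(λ)·x^λ = x₀, consisting of at most d+1 elements, which achieves f⋆(x₀): ∑_λ p(λ)·f(x^λ) = f⋆(x₀). In particular the infimum defining f⋆(x₀) is attained. -/
noncomputable section

open Set Finset Module

lemma myIsCompactConvexHull {E : Type} [NormedAddCommGroup E] [NormedSpace ℝ E]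
    [FiniteDimensional ℝ E] {s : Set E} (hne : s.Nonempty) (hs : IsCompact s) :
    IsCompact (convexHull ℝ s) := by
  classical
  set n := finrank ℝ E + 1 with hn
  set Φ : (Fin n → ℝ) × (Fin n → E) → E := fun p => ∑ i, p.1 i • p.2 i with hΦ
  have hΦc : Continuous Φ :=
    continuous_finset_sum _ fun i _ =>
      ((continuous_apply i).comp continuous_fst).smul ((continuous_apply i).comp continuous_snd)
  have hD : IsCompact ((stdSimplex ℝ (Fin n)) ×ˢ (Set.pi Set.univ fun _ : Fin n => s)) :=
    (isCompact_stdSimplex _ _).prod (isCompact_univ_pi fun _ => hs)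
  have heq : convexHull ℝ s = Φ '' ((stdSimplex ℝ (Fin n)) ×ˢ (Set.pi Set.univ fun _ : Fin n => s)) := by
    ext x
    constructor
    · intro hx
      obtain ⟨ι, hfin, z, w, hz, hind, hpos, hsum, hcomb⟩ :=
        eq_pos_convex_span_of_mem_convexHull hx
      have hk : Fintype.card ι ≤ n := by
        refine hind.card_le_finrank_succ.trans ?_
        exact Nat.add_le_add_right (Submodule.finrank_le _) 1
      set ψ : ι ↪ Fin n := (Fintype.equivFin ι).toEmbedding.trans (Fin.castLEEmb hk) with hψ
      have hinj : Function.Injective ψ := ψ.injective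
      set w' : Fin n → ℝ := Function.extend ψ w 0 with hw'
      set z' : Fin n → E := Function.extend ψ z (fun _ => hne.some) with hz'
      have hwψ : ∀ i, w' (ψ i) = w i := fun i => hinj.extend_apply _ _ _
      have hzψ : ∀ i, z' (ψ i) = z i := fun i => hinj.extend_apply _ _ _
      have hw0 : ∀ j, j ∉ Set.range ψ → w' j = 0 := by
        intro j hj
        rw [hw', Function.extend_apply' _ _ _ (by simpa using hj)]; rfl
      have hsum' : ∀ (M : Type) (_ : AddCommMonoid M) (F : Fin n → M),
          (∀ j, j ∉ Set.range ψ → F j = 0) → ∑ j, F j = ∑ i, F (ψ i) := by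
        intro M _ F h0
        rw [← Finset.sum_map Finset.univ ψ F]
        refine (Finset.sum_subset (Finset.subset_univ _) fun j _ hj => ?_).symm
        refine h0 j fun ⟨i, hi⟩ => hj ?_
        simp [← hi]
      have h1 : ∀ j, 0 ≤ w' j := by
        intro j
        rcases em (∃ i, ψ i = j) with ⟨i, rfl⟩ | h
        · rw [hwψ]; exact (hpos i).le
        · rw [hw0 j (by simpa using h)]
      have h2 : ∑ j, w' j = 1 := by
        rw [hsum' ℝ _ w' hw0, ← hsum]
        exact Finset.sum_congr rfl fun i _ => hwψ i
      have h3 : ∀ j, z' j ∈ s := by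
        intro j
        rcases em (∃ i, ψ i = j) with ⟨i, rfl⟩ | h
        · rw [hzψ]; exact hz (mem_range_self i)
        · rw [hz', Function.extend_apply' _ _ _ h]; exact hne.some_mem
      have h4 : ∑ j, w' j • z' j = x := by
        rw [hsum' E _ (fun j => w' j • z' j) fun j hj => by show w' j • z' j = 0; rw [hw0 j hj, zero_smul], ← hcomb]
        exact Finset.sum_congr rfl fun i _ => by rw [hwψ, hzψ]
      exact ⟨(w', z'), ⟨⟨h1, h2⟩, fun j _ => h3 j⟩, h4⟩
    · rintro ⟨⟨w, z⟩, ⟨⟨hw0, hw1⟩, hzs⟩, rfl⟩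
      show ∑ i, w i • z i ∈ convexHull ℝ s
      rw [← Finset.centerMass_eq_of_sum_1 _ _ hw1]
      exact Finset.centerMass_mem_convexHull _ (fun i _ => hw0 i) (by rw [hw1]; exact one_pos)
        (fun i _ => hzs i (Set.mem_univ i))
  rw [heq]
  exact hD.image hΦc

/-- The convex-roof value `f⋆(x₀)`: the infimum of `∑ p(λ) f(xλ)` over finite
convex decompositions `∑ p(λ) xλ = x₀` with all `xλ ∈ S`. -/
def fstar {d : ℕ} (S : Set (Fin d → ℝ)) (f : (Fin d → ℝ) → ℝ)
    (x₀ : Fin d → ℝ) : ℝ :=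
  sInf {y | ∃ (m : ℕ) (xs : Fin m → Fin d → ℝ) (pr : Fin m → ℝ),
    (∀ i, 0 ≤ pr i) ∧ (∑ i, pr i) = 1 ∧ (∀ i, xs i ∈ S) ∧
    (∑ i, pr i • xs i) = x₀ ∧ y = ∑ i, pr i * f (xs i)}
/-- Proposition 6: `f⋆(x₀)` is attained by a convex decomposition with at most
`d + 1` points. -/
theorem fstar_attained_small_support {d : ℕ} (S : Set (Fin d → ℝ))
    (f : (Fin d → ℝ) → ℝ) (hS : S.Nonempty) (hScomp : IsCompact S)
    (hSconv : Convex ℝ S) (hf : ContinuousOn f S)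
    (x₀ : Fin d → ℝ) (hx₀ : x₀ ∈ S) :
    ∃ (m : ℕ) (xs : Fin m → Fin d → ℝ) (pr : Fin m → ℝ),
      m ≤ d + 1 ∧ (∀ i, 0 ≤ pr i) ∧ (∑ i, pr i) = 1 ∧ (∀ i, xs i ∈ S) ∧
      (∑ i, pr i • xs i) = x₀ ∧ (∑ i, pr i * f (xs i)) = fstar S f x₀ := by
  classical
  set g : (Fin d → ℝ) → (Fin d → ℝ) × ℝ := fun x => (x, f x) with hg
  set G : Set ((Fin d → ℝ) × ℝ) := g '' S with hGdef
  have hGcomp : IsCompact G := hScomp.image_of_continuousOn (continuousOn_id.prodMk hf)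
  have hGne : G.Nonempty := hS.image g
  have hK : IsCompact (convexHull ℝ G) := myIsCompactConvexHull hGne hGcomp
  set K := convexHull ℝ G with hKdef
  set A := {y | ∃ (m : ℕ) (xs : Fin m → Fin d → ℝ) (pr : Fin m → ℝ),
    (∀ i, 0 ≤ pr i) ∧ (∑ i, pr i) = 1 ∧ (∀ i, xs i ∈ S) ∧
    (∑ i, pr i • xs i) = x₀ ∧ y = ∑ i, pr i * f (xs i)} with hAdef
  set T := (fun t => (x₀, t)) ⁻¹' K with hTdef
  -- fstar = sInf A
  have hfstar : fstar S f x₀ = sInf A := rfl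
  -- A ⊆ T
  have hAT : A ⊆ T := by
    rintro y ⟨m, xs, pr, hpos, hsum, hmem, hcomb, rfl⟩
    show (x₀, ∑ i, pr i * f (xs i)) ∈ K
    have : (x₀, ∑ i, pr i * f (xs i)) = ∑ i, pr i • g (xs i) := by
      rw [Prod.ext_iff]
      constructor
      · simp [Prod.fst_sum, hcomb, hg]
      · simp [Prod.snd_sum, smul_eq_mul, hg]
    rw [this, ← Finset.centerMass_eq_of_sum_1 _ _ hsum]
    exact Finset.centerMass_mem_convexHull _ (fun i _ => hpos i) (by rw [hsum]; exact one_pos)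
      (fun i _ => ⟨xs i, hmem i, rfl⟩)
  -- T is compact and nonempty
  have hTclosed : IsClosed T := hK.isClosed.preimage (Continuous.prodMk_right x₀)
  have hTsub : T ⊆ Prod.snd '' K := fun t ht => ⟨(x₀, t), ht, rfl⟩
  have hTcomp : IsCompact T := (hK.image continuous_snd).of_isClosed_subset hTclosed hTsub
  have hTne : T.Nonempty := ⟨f x₀, subset_convexHull ℝ G ⟨x₀, hx₀, rfl⟩⟩
  set t₀ := sInf T with ht₀
  have ht₀T : t₀ ∈ T := hTcomp.sInf_mem hTne
  -- dimension of the ambient space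
  have hfinrank : finrank ℝ ((Fin d → ℝ) × ℝ) = d + 1 := by simp [finrank_prod]
  -- Carathéodory decomposition of (x₀, t₀)
  obtain ⟨ι, hfin, z, w, hz, hind, hpos, hsum, hcomb⟩ :=
    eq_pos_convex_span_of_mem_convexHull (ht₀T : (x₀, t₀) ∈ K)
  have hk2 : Fintype.card ι ≤ d + 2 := by
    refine hind.card_le_finrank_succ.trans ?_
    have := Submodule.finrank_le (vectorSpan ℝ (Set.range z))
    omega
  -- the cardinality cannot be d + 2
  have hne2 : Fintype.card ι ≠ d + 2 := by
    intro hcard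
    have htop : affineSpan ℝ (Set.range z) = ⊤ :=
      hind.affineSpan_eq_top_iff_card_eq_finrank_add_one.mpr (by rw [hcard, hfinrank])
    set b : AffineBasis ι ℝ ((Fin d → ℝ) × ℝ) := ⟨z, hind, htop⟩ with hb
    have hbz : ⇑b = z := rfl
    have hcoord : ∀ i, b.coord i (x₀, t₀) = w i := by
      intro i
      have hxc : (x₀, t₀) = Finset.univ.affineCombination ℝ z w := by
        rw [affineCombination_eq_linear_combination _ _ _ hsum, hcomb]
      rw [hxc]
      exact b.coord_apply_combination_of_mem (Finset.mem_univ i) hsum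
    have hint : (x₀, t₀) ∈ interior (convexHull ℝ (Set.range z)) := by
      rw [← hbz, b.interior_convexHull]
      intro i
      rw [hcoord i]
      exact hpos i
    have hintK : (x₀, t₀) ∈ interior K :=
      interior_mono (convexHull_mono hz) hint
    obtain ⟨ε, hε, hball⟩ := Metric.isOpen_iff.mp isOpen_interior _ hintK
    have hy : (x₀, t₀ - ε / 2) ∈ K := by
      refine interior_subset (hball ?_)
      rw [Metric.mem_ball, Prod.dist_eq]
      simp [Real.dist_eq, abs_of_nonneg hε.le]
      linarith
    have : t₀ ≤ t₀ - ε / 2 := csInf_le hTcomp.bddBelow hy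
    linarith
  have hk1 : Fintype.card ι ≤ d + 1 := by omega
  -- build the decomposition indexed by Fin m
  set m := Fintype.card ι with hm
  set e := Fintype.equivFin ι with he
  set xs : Fin m → Fin d → ℝ := fun i => (z (e.symm i)).1 with hxs
  set pr : Fin m → ℝ := fun i => w (e.symm i) with hpr
  have hzS : ∀ j, (z j).1 ∈ S ∧ (z j).2 = f ((z j).1) := by
    intro j
    obtain ⟨x, hxS, hgx⟩ := hz (Set.mem_range_self j)
    rw [← hgx]
    exact ⟨hxS, rfl⟩
  have hsum1 : ∑ i, pr i = 1 := by rw [← hsum]; exact Equiv.sum_comp e.symm w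
  have hcomb1 : ∑ i, pr i • xs i = x₀ := by
    have h1 : ∑ i : Fin m, pr i • xs i = ∑ j : ι, w j • (z j).1 :=
      Equiv.sum_comp e.symm (fun j => w j • (z j).1)
    have h2 : (∑ j : ι, w j • z j).1 = ∑ j : ι, w j • (z j).1 := by
      rw [Prod.fst_sum]; rfl
    rw [h1, ← h2, hcomb]
  have hval : ∑ i, pr i * f (xs i) = t₀ := by
    have h1 : ∑ i : Fin m, pr i * f (xs i) = ∑ j : ι, w j * f ((z j).1) :=
      Equiv.sum_comp e.symm (fun j => w j * f ((z j).1))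
    have h2 : (∑ j : ι, w j • z j).2 = ∑ j : ι, w j * (z j).2 := by
      rw [Prod.snd_sum]; rfl
    rw [h1]
    have h3 : ∑ j : ι, w j * f ((z j).1) = ∑ j : ι, w j * (z j).2 :=
      Finset.sum_congr rfl fun j _ => by rw [(hzS j).2]
    rw [h3, ← h2, hcomb]
  -- t₀ = sInf A
  have ht₀A : t₀ ∈ A := by
    refine ⟨m, xs, pr, fun i => (hpos _).le, hsum1, fun i => (hzS _).1, hcomb1, hval.symm⟩
  have hsInfA : sInf A = t₀ := by
    refine le_antisymm (csInf_le ⟨sInf T, fun y hy => csInf_le hTcomp.bddBelow (hAT hy)⟩ ht₀A) ?_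
    exact le_csInf ⟨t₀, ht₀A⟩ fun y hy => csInf_le hTcomp.bddBelow (hAT hy)
  exact ⟨m, xs, pr, hk1, fun i => (hpos _).le, hsum1, fun i => (hzS _).1, hcomb1, by
    rw [hval, hfstar, hsInfA]⟩

end
end

section
/- Let S ⊆ ℝ^d be a nonempty compact convex set, f : S → ℝ continuous and concave, and x₀ ∈ S. Then there exists a finite family of points x^λ ∈ S and weights p(λ) ≥ 0 with ∑_λ p(λ) = 1 and ∑_λ p(λ)·x^λ = x₀ achieving f⋆(x₀) in which every point x^λ is an extreme point of S. -/
noncomputable section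

open Set Module Filter Topology

lemma carath_fin {E : Type} [NormedAddCommGroup E] [NormedSpace ℝ E]
    [FiniteDimensional ℝ E] {s : Set E} {x : E} (hx : x ∈ convexHull ℝ s) :
    ∃ (z : Fin (finrank ℝ E + 1) → E) (w : Fin (finrank ℝ E + 1) → ℝ),
      (∀ i, 0 ≤ w i) ∧ ∑ i, w i = 1 ∧ (∀ i, z i ∈ s) ∧ ∑ i, w i • z i = x := by
  classical
  set N := finrank ℝ E + 1 with hN
  obtain ⟨ι, hfin, z, w, hzs, hindep, hwpos, hwsum, hxeq⟩ :=
    eq_pos_convex_span_of_mem_convexHull hx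
  have hg₀ : ∃ g₀, g₀ ∈ s := by
    have : Nonempty ι := by
      by_contra h
      rw [not_nonempty_iff] at h
      simp [Finset.univ_eq_empty] at hwsum
    obtain ⟨i⟩ := this
    exact ⟨z i, hzs (Set.mem_range_self i)⟩
  obtain ⟨g₀, hg₀⟩ := hg₀
  have hcard : Fintype.card ι ≤ N := by
    calc Fintype.card ι ≤ finrank ℝ (vectorSpan ℝ (Set.range z)) + 1 :=
          hindep.card_le_finrank_succ
      _ ≤ N := by
          have := Submodule.finrank_le (vectorSpan ℝ (Set.range z))
          omega
  have : Nonempty (ι ↪ Fin N) := by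
    rw [Function.Embedding.nonempty_iff_card_le]
    simpa using hcard
  obtain ⟨e⟩ := this
  refine ⟨fun j => if h : ∃ i, e i = j then z h.choose else g₀,
    fun j => ∑ i, if e i = j then w i else 0, ?_, ?_, ?_, ?_⟩
  · intro j
    exact Finset.sum_nonneg fun i _ => by
      split <;> [exact (hwpos i).le; rfl]
  · rw [Finset.sum_comm]
    simpa using hwsum
  · intro j
    simp only []
    split
    · exact hzs (Set.mem_range_self _)
    · exact hg₀
  · rw [← hxeq]
    have key : ∀ j, (∑ i, if e i = j then w i else 0) •
        (if h : ∃ i, e i = j then z h.choose else g₀)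
        = ∑ i, if e i = j then w i • z i else 0 := by
      intro j
      rw [Finset.sum_smul]
      refine Finset.sum_congr rfl fun i _ => ?_
      by_cases h : e i = j
      · have hex : ∃ i', e i' = j := ⟨i, h⟩
        have : hex.choose = i := e.injective (hex.choose_spec.trans h.symm)
        simp [h, hex, this]
      · simp [h]
    simp_rw [key]
    rw [Finset.sum_comm]
    refine Finset.sum_congr rfl fun i _ => ?_
    simp


theorem minkowski_aux : ∀ (n : ℕ) {E : Type} [NormedAddCommGroup E] [NormedSpace ℝ E]
    [FiniteDimensional ℝ E] (S : Set E), IsCompact S → Convex ℝ S → finrank ℝ E ≤ n →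
    S ⊆ convexHull ℝ (Set.extremePoints ℝ S) := by
  intro n
  induction n with
  | zero =>
    intro E _ _ _ S hcomp hconv hrank x hx
    have hsub : Subsingleton E := finrank_zero_iff.mp (Nat.le_zero.mp hrank)
    refine subset_convexHull ℝ _ ?_
    exact ⟨hx, fun x₁ _ x₂ _ _ => Subsingleton.elim _ _⟩
  | succ n IH =>
    intro E _ _ _ S hcomp hconv hrank x hx
    classical
    -- Endpoint claim: a point of S which is "extremal in direction v" lies in the hull
    -- of extreme points.
    have endpoint : ∀ b ∈ S, ∀ v : E, v ≠ 0 → (∀ s : ℝ, 0 < s → b + s • v ∉ S) →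
        b ∈ convexHull ℝ (Set.extremePoints ℝ S) := by
      intro b hb v hv hout
      have hSclosed : IsClosed S := hcomp.isClosed
      -- supporting functionals
      have H : ∀ k : ℕ, ∃ g : E →L[ℝ] ℝ, ‖g‖ = 1 ∧
          ∀ a ∈ S, g a ≤ g b + ((k : ℝ) + 1)⁻¹ * g v := by
        intro k
        have hpos : (0:ℝ) < ((k : ℝ) + 1)⁻¹ := by positivity
        obtain ⟨f, t, hft, htx⟩ :=
          geometric_hahn_banach_closed_point hconv hSclosed (hout _ hpos)
        have hfne : f ≠ 0 := by
          intro h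
          have h1 := hft b hb
          rw [h] at h1 htx
          simp at h1 htx
          linarith
        refine ⟨‖f‖⁻¹ • f, ?_, ?_⟩
        · exact norm_smul_inv_norm hfne
        · intro a ha
          have h1 : f a ≤ f b + ((k : ℝ) + 1)⁻¹ * f v := by
            have := (hft a ha).trans htx
            rw [map_add, map_smul] at this
            simpa [smul_eq_mul] using this.le
          simp only [ContinuousLinearMap.smul_apply, smul_eq_mul]
          have hinv : (0:ℝ) ≤ ‖f‖⁻¹ := by positivity
          calc ‖f‖⁻¹ * f a ≤ ‖f‖⁻¹ * (f b + ((k : ℝ) + 1)⁻¹ * f v) :=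
                mul_le_mul_of_nonneg_left h1 hinv
            _ = ‖f‖⁻¹ * f b + ((k : ℝ) + 1)⁻¹ * (‖f‖⁻¹ * f v) := by ring
      choose g hg1 hgle using H
      have hgmem : ∀ k, g k ∈ Metric.sphere (0 : E →L[ℝ] ℝ) 1 := fun k =>
        mem_sphere_zero_iff_norm.mpr (hg1 k)
      obtain ⟨u, humem, φ, hφmono, hφtend⟩ :=
        (isCompact_sphere (0 : E →L[ℝ] ℝ) 1).tendsto_subseq hgmem
      have hu1 : ‖u‖ = 1 := mem_sphere_zero_iff_norm.mp humem
      have hu0 : u ≠ 0 := by intro h; rw [h] at hu1; simp at hu1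
      have heval : ∀ a : E, Tendsto (fun j => g (φ j) a) atTop (𝓝 (u a)) := fun a =>
        ((ContinuousLinearMap.apply ℝ ℝ a).continuous.tendsto u).comp hφtend
      have hεtend : Tendsto (fun j => ((φ j : ℝ) + 1)⁻¹) atTop (𝓝 0) := by
        have h1 : Tendsto (fun k : ℕ => ((k : ℝ) + 1)⁻¹) atTop (𝓝 0) := by
          simpa [one_div] using tendsto_one_div_add_atTop_nhds_zero_nat (𝕜 := ℝ)
        exact h1.comp hφmono.tendsto_atTop
      have hmax : ∀ a ∈ S, u a ≤ u b := by
        intro a ha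
        have h2 : Tendsto (fun j => g (φ j) b + ((φ j : ℝ) + 1)⁻¹ * g (φ j) v) atTop
            (𝓝 (u b + 0 * u v)) := (heval b).add (hεtend.mul (heval v))
        have := le_of_tendsto_of_tendsto' (heval a) h2 (fun j => hgle (φ j) a ha)
        simpa using this
      -- the exposed face
      set F : Set E := {y ∈ S | u y = u b} with hF
      have hbF : b ∈ F := ⟨hb, rfl⟩
      have hFexp : IsExposed ℝ S F := by
        intro _
        refine ⟨u, ?_⟩
        ext y
        constructor
        · rintro ⟨hyS, hyu⟩
          exact ⟨hyS, fun z hz => by rw [hyu]; exact hmax z hz⟩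
        · rintro ⟨hyS, hyall⟩
          exact ⟨hyS, le_antisymm (hmax y hyS) (hyall b hb)⟩
      have hFextreme : Set.extremePoints ℝ F ⊆ Set.extremePoints ℝ S :=
        hFexp.isExtreme.extremePoints_subset_extremePoints
      have hFcomp : IsCompact F := by
        have : F = S ∩ u ⁻¹' {u b} := rfl
        rw [this]
        exact hcomp.inter_right (isClosed_singleton.preimage u.continuous)
      have hFconv : Convex ℝ F := by
        intro y₁ h₁ y₂ h₂ a c ha hc hac
        refine ⟨hconv h₁.1 h₂.1 ha hc hac, ?_⟩
        simp only [map_add, map_smul, smul_eq_mul, h₁.2, h₂.2]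
        have : a * u b + c * u b = (a + c) * u b := by ring
        rw [this, hac, one_mul]
      -- pass to the kernel of u
      set K : Submodule ℝ E := LinearMap.ker (u : E →ₗ[ℝ] ℝ) with hK
      have hKlt : finrank ℝ K < finrank ℝ E := by
        refine Submodule.finrank_lt ?_
        intro h
        exact hu0 (ContinuousLinearMap.coe_injective (LinearMap.ker_eq_top.mp h))
      have hKle : finrank ℝ K ≤ n := by omega
      set F₀ : Set K := {y : K | (y : E) + b ∈ F} with hF₀
      have hvalimg : (Subtype.val '' F₀ : Set E) = (fun z => z - b) '' F := by
        ext y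
        constructor
        · rintro ⟨y₀, hy₀, rfl⟩
          exact ⟨(y₀ : E) + b, hy₀, add_sub_cancel_right _ _⟩
        · rintro ⟨z, hz, rfl⟩
          have hzK : z - b ∈ K := by
            rw [hK, LinearMap.mem_ker, ContinuousLinearMap.coe_coe, map_sub, hz.2, sub_self]
          refine ⟨⟨z - b, hzK⟩, ?_, rfl⟩
          show (z - b) + b ∈ F
          rwa [sub_add_cancel]
      have hF₀comp : IsCompact F₀ := by
        rw [IsEmbedding.subtypeVal.isCompact_iff, hvalimg]
        exact hFcomp.image (continuous_id.sub continuous_const)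
      have hF₀conv : Convex ℝ F₀ := by
        intro y₁ h₁ y₂ h₂ a c ha hc hac
        have key : ((a • y₁ + c • y₂ : K) : E) + b
            = a • ((y₁ : E) + b) + c • ((y₂ : E) + b) := by
          push_cast
          match_scalars <;> linarith
        show ((a • y₁ + c • y₂ : K) : E) + b ∈ F
        rw [key]
        exact hFconv h₁ h₂ ha hc hac
      have h0 : (0 : K) ∈ F₀ := by simpa [hF₀] using hbF
      have h0hull := IH F₀ hF₀comp hF₀conv hKle h0
      rw [mem_convexHull_iff_exists_fintype] at h0hull
      obtain ⟨ι, hfin, w, zz, hw0, hw1, hzz, hsum⟩ := h0hull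
      -- push extreme points forward
      have hpush : ∀ i, (zz i : E) + b ∈ Set.extremePoints ℝ S := by
        intro i
        refine hFextreme ?_
        have hzzF : zz i ∈ F₀ := extremePoints_subset (hzz i)
        refine mem_extremePoints.mpr ⟨hzzF, ?_⟩
        intro x₁ hx₁ x₂ hx₂ hseg
        -- write x₁, x₂ as images
        have hx₁' : x₁ - b ∈ K := by rw [hK, LinearMap.mem_ker, ContinuousLinearMap.coe_coe, map_sub, hx₁.2, sub_self]
        have hx₂' : x₂ - b ∈ K := by rw [hK, LinearMap.mem_ker, ContinuousLinearMap.coe_coe, map_sub, hx₂.2, sub_self]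
        set y₁ : K := ⟨x₁ - b, hx₁'⟩
        set y₂ : K := ⟨x₂ - b, hx₂'⟩
        have hy₁ : y₁ ∈ F₀ := by simpa [hF₀, y₁] using hx₁
        have hy₂ : y₂ ∈ F₀ := by simpa [hF₀, y₂] using hx₂
        obtain ⟨a, c, ha, hc, hac, heq⟩ := hseg
        have hseg' : zz i ∈ openSegment ℝ y₁ y₂ := by
          refine ⟨a, c, ha, hc, hac, ?_⟩
          apply Subtype.ext
          push_cast
          have : a • (x₁ - b) + c • (x₂ - b) = a • x₁ + c • x₂ - (a + c) • b := by
            rw [smul_sub, smul_sub, add_smul]; abel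
          rw [this, hac, one_smul, heq]
          abel
        obtain ⟨he₁, he₂⟩ := (mem_extremePoints.mp (hzz i)).2 _ hy₁ _ hy₂ hseg'
        constructor
        · have := congrArg (fun y : K => (y : E) + b) he₁
          simpa [y₁] using this
        · have := congrArg (fun y : K => (y : E) + b) he₂
          simpa [y₂] using this
      -- b is the convex combination
      refine mem_convexHull_of_exists_fintype w (fun i => (zz i : E) + b) hw0 hw1 hpush ?_
      have : ∑ i, w i • ((zz i : E) + b) = (↑(∑ i, w i • zz i) : E) + (∑ i, w i) • b := by
        push_cast
        rw [Finset.sum_smul, ← Finset.sum_add_distrib]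
        exact Finset.sum_congr rfl fun i _ => by rw [smul_add]
      rw [this, hsum, hw1]
      simp
    -- main argument
    by_cases hxe : x ∈ Set.extremePoints ℝ S
    · exact subset_convexHull ℝ _ hxe
    · have : ∃ x₁ ∈ S, ∃ x₂ ∈ S, x ∈ openSegment ℝ x₁ x₂ ∧ ¬(x₁ = x ∧ x₂ = x) := by
        by_contra h
        push_neg at h
        exact hxe ⟨hx, fun x₁ h₁ x₂ h₂ hs => (h x₁ h₁ x₂ h₂ hs).1⟩
      obtain ⟨x₁, hx₁, x₂, hx₂, hseg, hne⟩ := this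
      have hx₁₂ : x₁ ≠ x₂ := by
        rintro rfl
        rw [openSegment_same] at hseg
        exact hne ⟨hseg.symm, hseg.symm⟩
      set v : E := x₂ - x₁ with hv
      have hv0 : v ≠ 0 := sub_ne_zero.mpr (Ne.symm hx₁₂)
      obtain ⟨a₁, b₁, ha₁, hb₁, hab₁, hxeq⟩ := hseg
      -- the set of parameters t with x + t v ∈ S
      set I : Set ℝ := {t : ℝ | x + t • v ∈ S} with hI
      have hmem₂ : a₁ ∈ I := by
        show x + a₁ • v ∈ S
        have : x + a₁ • v = x₂ := by
          have hb' : b₁ = 1 - a₁ := by linarith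
          rw [← hxeq, hv, hb']; module
        rwa [this]
      have hmem₁ : -b₁ ∈ I := by
        show x + (-b₁) • v ∈ S
        have : x + (-b₁) • v = x₁ := by
          have ha' : a₁ = 1 - b₁ := by linarith
          rw [← hxeq, hv, ha']; module
        rwa [this]
      have hIne : I.Nonempty := ⟨a₁, hmem₂⟩
      have hIclosed : IsClosed I := by
        have : I = (fun t : ℝ => x + t • v) ⁻¹' S := rfl
        rw [this]
        exact hcomp.isClosed.preimage (continuous_const.add (continuous_id.smul continuous_const))
      have hIbdd : Bornology.IsBounded I := by
        obtain ⟨R, hR⟩ := hcomp.isBounded.subset_closedBall 0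
        rw [Metric.isBounded_iff_subset_closedBall 0]
        refine ⟨(R + ‖x‖) / ‖v‖, fun t ht => ?_⟩
        have h1 : ‖x + t • v‖ ≤ R := by simpa using hR ht
        have h2 : ‖t • v‖ ≤ R + ‖x‖ := by
          calc ‖t • v‖ = ‖(x + t • v) - x‖ := by congr 1; abel
            _ ≤ ‖x + t • v‖ + ‖x‖ := norm_sub_le _ _
            _ ≤ R + ‖x‖ := by linarith
        rw [norm_smul] at h2
        have hvpos : 0 < ‖v‖ := norm_pos_iff.mpr hv0
        simp only [Metric.mem_closedBall, Real.dist_eq, sub_zero]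
        rw [Real.norm_eq_abs] at h2
        rw [le_div_iff₀ hvpos]
        linarith [abs_nonneg t]
      have hIcomp : IsCompact I := Metric.isCompact_of_isClosed_isBounded hIclosed hIbdd
      have hIconv : Convex ℝ I := by
        intro t₁ h₁ t₂ h₂ a c ha hc hac
        show x + (a * t₁ + c * t₂) • v ∈ S
        have : x + (a * t₁ + c * t₂) • v = a • (x + t₁ • v) + c • (x + t₂ • v) := by
          match_scalars <;> linarith
        rw [this]
        exact hconv h₁ h₂ ha hc hac
      set α := sInf I with hα
      set β := sSup I with hβ
      have hαI : α ∈ I := hIcomp.sInf_mem hIne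
      have hβI : β ∈ I := hIcomp.sSup_mem hIne
      have hαle : α ≤ -b₁ := csInf_le hIbdd.bddBelow hmem₁
      have hβge : a₁ ≤ β := le_csSup hIbdd.bddAbove hmem₂
      have hαneg : α < 0 := lt_of_le_of_lt hαle (by linarith)
      have hβpos : 0 < β := lt_of_lt_of_le ha₁ hβge
      -- endpoints
      have hbub : x + β • v ∈ convexHull ℝ (Set.extremePoints ℝ S) := by
        refine endpoint _ hβI v hv0 ?_
        intro s hs hmem
        have : β + s ∈ I := by
          show x + (β + s) • v ∈ S
          rw [add_smul, ← add_assoc]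
          exact hmem
        have := le_csSup hIbdd.bddAbove this
        linarith
      have halb : x + α • v ∈ convexHull ℝ (Set.extremePoints ℝ S) := by
        refine endpoint _ hαI (-v) (neg_ne_zero.mpr hv0) ?_
        intro s hs hmem
        have : α - s ∈ I := by
          show x + (α - s) • v ∈ S
          have : x + (α - s) • v = x + α • v + s • (-v) := by
            rw [smul_neg, sub_smul]; abel
          rwa [this]
        have := csInf_le hIbdd.bddBelow this
        linarith
      -- x is a convex combination of the endpoints
      have hβα : 0 < β - α := by linarith
      have hne : β - α ≠ 0 := ne_of_gt hβα
      have hc₁ : (0:ℝ) ≤ β / (β - α) := div_nonneg (by linarith) (by linarith)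
      have hc₂ : (0:ℝ) ≤ -α / (β - α) := div_nonneg (by linarith) (by linarith)
      have hsum1 : β / (β - α) + -α / (β - α) = 1 := by
        field_simp
        ring
      have hcomb : x = (β / (β - α)) • (x + α • v) + (-α / (β - α)) • (x + β • v) := by
        match_scalars <;> (field_simp; try ring)
      rw [hcomb]
      exact (convex_convexHull ℝ _) halb hbub hc₁ hc₂ hsum1



/-- Proposition 7: if `f` is concave, `f⋆(x₀)` is attained by a convex
decomposition into extreme points of `S`. -/
theorem fstar_attained_extreme_points {d : ℕ} (S : Set (Fin d → ℝ))
    (f : (Fin d → ℝ) → ℝ) (hS : S.Nonempty) (hScomp : IsCompact S)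
    (hSconv : Convex ℝ S) (hf : ContinuousOn f S) (hconc : ConcaveOn ℝ S f)
    (x₀ : Fin d → ℝ) (hx₀ : x₀ ∈ S) :
    ∃ (m : ℕ) (xs : Fin m → Fin d → ℝ) (pr : Fin m → ℝ),
      (∀ i, 0 ≤ pr i) ∧ (∑ i, pr i) = 1 ∧
      (∀ i, xs i ∈ Set.extremePoints ℝ S) ∧
      (∑ i, pr i • xs i) = x₀ ∧ (∑ i, pr i * f (xs i)) = fstar S f x₀ := by
  classical
  set A : Set ℝ := {y | ∃ (m : ℕ) (xs : Fin m → Fin d → ℝ) (pr : Fin m → ℝ),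
    (∀ i, 0 ≤ pr i) ∧ (∑ i, pr i) = 1 ∧ (∀ i, xs i ∈ S) ∧
    (∑ i, pr i • xs i) = x₀ ∧ y = ∑ i, pr i * f (xs i)} with hA
  have hfstar : fstar S f x₀ = sInf A := rfl
  -- the graph of f over S
  set G : Set ((Fin d → ℝ) × ℝ) := (fun x => (x, f x)) '' S with hG
  have hGcomp : IsCompact G := hScomp.image_of_continuousOn (continuousOn_id.prodMk hf)
  set N : ℕ := finrank ℝ ((Fin d → ℝ) × ℝ) + 1 with hN
  have hΦcont : Continuous fun p : (Fin N → (Fin d → ℝ) × ℝ) × (Fin N → ℝ) =>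
      ∑ i, p.2 i • p.1 i := by
    apply continuous_finset_sum
    intro i _
    exact ((continuous_apply i).comp continuous_snd).smul
      ((continuous_apply i).comp continuous_fst)
  set C : Set ((Fin N → (Fin d → ℝ) × ℝ) × (Fin N → ℝ)) :=
    {p | (∀ i, p.1 i ∈ G) ∧ (∀ i, 0 ≤ p.2 i) ∧ (∑ i, p.2 i) = 1 ∧
      (∑ i, p.2 i • p.1 i).1 = x₀} with hC
  have hCclosed : IsClosed C := by
    have h1 : IsClosed {p : (Fin N → (Fin d → ℝ) × ℝ) × (Fin N → ℝ) | ∀ i, p.1 i ∈ G} := by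
      rw [show {p : (Fin N → (Fin d → ℝ) × ℝ) × (Fin N → ℝ) | ∀ i, p.1 i ∈ G}
        = ⋂ i, {p : (Fin N → (Fin d → ℝ) × ℝ) × (Fin N → ℝ) | p.1 i ∈ G} by ext p; simp]
      exact isClosed_iInter fun i =>
        hGcomp.isClosed.preimage ((continuous_apply i).comp continuous_fst)
    have h2 : IsClosed {p : (Fin N → (Fin d → ℝ) × ℝ) × (Fin N → ℝ) | ∀ i, 0 ≤ p.2 i} := by
      rw [show {p : (Fin N → (Fin d → ℝ) × ℝ) × (Fin N → ℝ) | ∀ i, 0 ≤ p.2 i}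
        = ⋂ i, {p : (Fin N → (Fin d → ℝ) × ℝ) × (Fin N → ℝ) | 0 ≤ p.2 i} by ext p; simp]
      exact isClosed_iInter fun i =>
        isClosed_le continuous_const ((continuous_apply i).comp continuous_snd)
    have h3 : IsClosed {p : (Fin N → (Fin d → ℝ) × ℝ) × (Fin N → ℝ) | (∑ i, p.2 i) = 1} :=
      isClosed_eq (continuous_finset_sum _ fun i _ =>
        (continuous_apply i).comp continuous_snd) continuous_const
    have h4 : IsClosed {p : (Fin N → (Fin d → ℝ) × ℝ) × (Fin N → ℝ) |
        (∑ i, p.2 i • p.1 i).1 = x₀} :=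
      isClosed_eq (continuous_fst.comp hΦcont) continuous_const
    have : C = _ ∩ (_ ∩ (_ ∩ _)) := rfl
    rw [this]
    exact h1.inter (h2.inter (h3.inter h4))
  have hCcomp : IsCompact C := by
    refine IsCompact.of_isClosed_subset
      (((isCompact_univ_pi fun _ : Fin N => hGcomp)).prod
        (isCompact_univ_pi fun _ : Fin N => isCompact_Icc (a := (0:ℝ)) (b := 1)))
      hCclosed ?_
    rintro p ⟨hp1, hp2, hp3, _⟩
    constructor
    · intro i _
      exact hp1 i
    · intro i _
      refine ⟨hp2 i, ?_⟩
      rw [← hp3]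
      exact Finset.single_le_sum (fun j _ => hp2 j) (Finset.mem_univ i)
  set T : Set ℝ := (fun p : (Fin N → (Fin d → ℝ) × ℝ) × (Fin N → ℝ) =>
    (∑ i, p.2 i • p.1 i).2) '' C with hT
  have hTcomp : IsCompact T := hCcomp.image (continuous_snd.comp hΦcont)
  -- A = T
  have hAT : A = T := by
    ext y
    constructor
    · rintro ⟨m, xs, pr, h0, h1, hxs, hsum, rfl⟩
      have hsum' : ∑ i, pr i • ((xs i, f (xs i)) : (Fin d → ℝ) × ℝ)
          = (x₀, ∑ i, pr i * f (xs i)) := by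
        rw [Prod.ext_iff]
        constructor
        · simp only [Prod.fst_sum, Prod.smul_fst]
          exact hsum
        · simp only [Prod.snd_sum, Prod.smul_snd, smul_eq_mul]
      have hmem : ((x₀, ∑ i, pr i * f (xs i)) : (Fin d → ℝ) × ℝ) ∈ convexHull ℝ G :=
        mem_convexHull_of_exists_fintype pr (fun i => (xs i, f (xs i))) h0 h1
          (fun i => ⟨xs i, hxs i, rfl⟩) hsum'
      obtain ⟨z, w, hw0, hw1, hzG, hzsum⟩ := carath_fin hmem
      refine ⟨(z, w), ⟨hzG, hw0, hw1, ?_⟩, ?_⟩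
      · show (∑ i, w i • z i).1 = x₀
        rw [hzsum]
      · show (∑ i, w i • z i).2 = _
        rw [hzsum]
    · rintro ⟨p, ⟨hpG, hp0, hp1, hpfst⟩, rfl⟩
      choose ξ hξS hξe using hpG
      refine ⟨N, ξ, p.2, hp0, hp1, hξS, ?_, ?_⟩
      · rw [← hpfst]
        simp only [Prod.fst_sum, Prod.smul_fst]
        refine Finset.sum_congr rfl fun i _ => ?_
        rw [← hξe i]
      · simp only [Prod.snd_sum, Prod.smul_snd, smul_eq_mul]
        refine Finset.sum_congr rfl fun i _ => ?_
        rw [← hξe i]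
  have hAne : f x₀ ∈ A := by
    refine ⟨1, fun _ => x₀, fun _ => 1, fun _ => zero_le_one, by simp, fun _ => hx₀, by simp, by simp⟩
  have hAbdd : BddBelow A := hAT ▸ hTcomp.bddBelow
  have hAmem : sInf A ∈ A := by
    rw [hAT]
    exact hTcomp.sInf_mem (hAT ▸ ⟨f x₀, hAne⟩)
  obtain ⟨m, xs, pr, h0, h1, hxsS, hsum, hval⟩ := hAmem
  -- decompose each xs i into extreme points
  have hmink := minkowski_aux (finrank ℝ (Fin d → ℝ)) S hScomp hSconv le_rfl
  set N' : ℕ := finrank ℝ (Fin d → ℝ) + 1 with hN'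
  have hdec : ∀ i : Fin m, ∃ (z : Fin N' → Fin d → ℝ)
      (w : Fin N' → ℝ),
      (∀ j, 0 ≤ w j) ∧ ∑ j, w j = 1 ∧ (∀ j, z j ∈ Set.extremePoints ℝ S) ∧
      ∑ j, w j • z j = xs i := fun i => carath_fin (hmink (hxsS i))
  choose es qs hq0 hq1 hqext hqsum using hdec
  set M : ℕ := m * N' with hM
  set e : Fin m × Fin N' ≃ Fin M := finProdFinEquiv with he
  set XS : Fin M → Fin d → ℝ := fun k => es (e.symm k).1 (e.symm k).2 with hXS
  set PR : Fin M → ℝ := fun k => pr (e.symm k).1 * qs (e.symm k).1 (e.symm k).2 with hPR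
  have hPR0 : ∀ k, 0 ≤ PR k := fun k => mul_nonneg (h0 _) (hq0 _ _)
  have sum_comp : ∀ (g : Fin m × Fin N' → ℝ), ∑ k, g (e.symm k) = ∑ p, g p := fun g =>
    Equiv.sum_comp e.symm g
  have hPR1 : ∑ k, PR k = 1 := by
    rw [hPR]
    rw [sum_comp fun p => pr p.1 * qs p.1 p.2]
    rw [Fintype.sum_prod_type]
    simp_rw [← Finset.mul_sum, hq1, mul_one]
    exact h1
  have hXSext : ∀ k, XS k ∈ Set.extremePoints ℝ S := fun k => hqext _ _
  have hXSsum : ∑ k, PR k • XS k = x₀ := by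
    rw [hPR, hXS]
    rw [show ∑ k, (pr (e.symm k).1 * qs (e.symm k).1 (e.symm k).2) • es (e.symm k).1 (e.symm k).2
      = ∑ p : Fin m × Fin N', (pr p.1 * qs p.1 p.2) • es p.1 p.2 from
      Equiv.sum_comp e.symm fun p => (pr p.1 * qs p.1 p.2) • es p.1 p.2]
    rw [Fintype.sum_prod_type]
    simp_rw [mul_smul, ← Finset.smul_sum]
    simp_rw [hqsum]
    exact hsum
  -- value comparison
  have hjensen : ∀ i, ∑ j, qs i j * f (es i j) ≤ f (xs i) := by
    intro i
    rw [← hqsum i]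
    have := hconc.le_map_sum (t := Finset.univ) (w := qs i) (p := es i)
      (fun j _ => hq0 i j) (hq1 i) (fun j _ => extremePoints_subset (hqext i j))
    simpa [smul_eq_mul] using this
  have hVle : ∑ k, PR k * f (XS k) ≤ sInf A := by
    rw [hval]
    rw [show ∑ k, PR k * f (XS k)
      = ∑ p : Fin m × Fin N', (pr p.1 * qs p.1 p.2) * f (es p.1 p.2) from
      Equiv.sum_comp e.symm fun p => (pr p.1 * qs p.1 p.2) * f (es p.1 p.2)]
    rw [Fintype.sum_prod_type]
    refine Finset.sum_le_sum fun i _ => ?_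
    have : ∑ j, pr i * qs i j * f (es i j) = pr i * ∑ j, qs i j * f (es i j) := by
      rw [Finset.mul_sum]
      exact Finset.sum_congr rfl fun j _ => by ring
    rw [this]
    exact mul_le_mul_of_nonneg_left (hjensen i) (h0 i)
  have hVge : sInf A ≤ ∑ k, PR k * f (XS k) :=
    csInf_le hAbdd ⟨M, XS, PR, hPR0, hPR1,
      fun k => extremePoints_subset (hXSext k), hXSsum, rfl⟩
  exact ⟨M, XS, PR, hPR0, hPR1, hXSext, hXSsum, by
    rw [hfstar]
    exact le_antisymm hVle hVge⟩


end
end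

section
/- Let S ⊆ ℝ^d be a nonempty compact convex set, f : S → ℝ continuous, and x₀ ∈ S. Then strong duality holds: f⋆(x₀) = sup{ t + v·x₀ : t ∈ ℝ, v ∈ ℝ^d, and t + v·x ≤ f(x) for all x ∈ S }. -/
noncomputable section

open Set in
lemma isCompact_convexHull_of_isCompact {E : Type*} [NormedAddCommGroup E] [NormedSpace ℝ E]
    [FiniteDimensional ℝ E] {T : Set E} (hT : IsCompact T) (hne : T.Nonempty) :
    IsCompact (convexHull ℝ T) := by
  classical
  obtain ⟨t₀, ht₀⟩ := hne
  set n := Module.finrank ℝ E + 1 with hn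
  set φ : (Fin n → ℝ) × (Fin n → E) → E := fun p => ∑ i, p.1 i • p.2 i with hφ
  have hcont : Continuous φ := by
    apply continuous_finset_sum
    intro i _
    exact ((continuous_apply i).comp continuous_fst).smul
      ((continuous_apply i).comp continuous_snd)
  have hC : IsCompact ((stdSimplex ℝ (Fin n)) ×ˢ (Set.univ.pi fun _ : Fin n => T)) :=
    (isCompact_stdSimplex _ _).prod (isCompact_univ_pi fun _ => hT)
  have himg : convexHull ℝ T = φ '' ((stdSimplex ℝ (Fin n)) ×ˢ (Set.univ.pi fun _ : Fin n => T)) := by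
    apply Subset.antisymm
    · intro x hx
      obtain ⟨ι, hfin, z, w, hrange, haff, hwpos, hw1, hsum⟩ :=
        eq_pos_convex_span_of_mem_convexHull hx
      have hcard : Fintype.card ι ≤ n := by
        refine le_trans haff.card_le_finrank_succ ?_
        exact Nat.add_le_add_right (Submodule.finrank_le (vectorSpan ℝ (Set.range z))) 1
      obtain ⟨e⟩ : Nonempty (ι ↪ Fin n) := by
        refine Function.Embedding.nonempty_of_card_le ?_
        simpa using hcard
      set w' : Fin n → ℝ := fun j => ∑ i ∈ Finset.univ.filter (fun i => e i = j), w i with hw'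
      set z' : Fin n → E := fun j =>
        if h : ∃ i, e i = j then z h.choose else t₀ with hz'
      have hz'e : ∀ i, z' (e i) = z i := by
        intro i
        have h : ∃ i', e i' = e i := ⟨i, rfl⟩
        have := h.choose_spec
        simp only [hz', dif_pos h]
        rw [e.injective this]
      refine ⟨(w', z'), ⟨⟨fun j => Finset.sum_nonneg fun i _ => (hwpos i).le, ?_⟩, ?_⟩, ?_⟩
      · rw [← hw1]
        exact Finset.sum_fiberwise _ _ _
      · intro j _
        simp only [hz']
        split
        · exact hrange ⟨_, rfl⟩
        · exact ht₀
      · simp only [hφ, hw']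
        rw [← hsum]
        have : ∀ j : Fin n, (∑ i ∈ Finset.univ.filter (fun i => e i = j), w i) • z' j
            = ∑ i ∈ Finset.univ.filter (fun i => e i = j), w i • z i := by
          intro j
          rw [Finset.sum_smul]
          apply Finset.sum_congr rfl
          intro i hi
          simp only [Finset.mem_filter] at hi
          rw [← hi.2, hz'e]
        simp only [this]
        exact Finset.sum_fiberwise _ _ _
    · rintro _ ⟨⟨w, z⟩, ⟨⟨hw0, hw1⟩, hzT⟩, rfl⟩
      exact mem_convexHull_of_exists_fintype w z hw0 hw1 (fun i => hzT i (mem_univ i)) rfl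
  rw [himg]
  exact hC.image hcont

/-- Proposition 8 (strong duality): `f⋆(x₀)` equals the supremum of affine
lower bounds on `f` over `S`, evaluated at `x₀`. -/
theorem fstar_strong_duality {d : ℕ} (S : Set (Fin d → ℝ))
    (f : (Fin d → ℝ) → ℝ) (hS : S.Nonempty) (hScomp : IsCompact S)
    (hSconv : Convex ℝ S) (hf : ContinuousOn f S)
    (x₀ : Fin d → ℝ) (hx₀ : x₀ ∈ S) :
    fstar S f x₀ =
      sSup {y | ∃ (t : ℝ) (v : Fin d → ℝ),
        (∀ x ∈ S, t + (∑ i, v i * x i) ≤ f x) ∧ y = t + ∑ i, v i * x₀ i} := by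
  classical
  set P : Set ℝ := {y | ∃ (m : ℕ) (xs : Fin m → Fin d → ℝ) (pr : Fin m → ℝ),
    (∀ i, 0 ≤ pr i) ∧ (∑ i, pr i) = 1 ∧ (∀ i, xs i ∈ S) ∧
    (∑ i, pr i • xs i) = x₀ ∧ y = ∑ i, pr i * f (xs i)} with hP
  set D : Set ℝ := {y | ∃ (t : ℝ) (v : Fin d → ℝ),
    (∀ x ∈ S, t + (∑ i, v i * x i) ≤ f x) ∧ y = t + ∑ i, v i * x₀ i} with hD
  have hfP : fstar S f x₀ = sInf P := rfl
  -- minimum of f on S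
  obtain ⟨xm, hxmS, hxm⟩ := hScomp.exists_isMinOn hS hf
  have hmin : ∀ x ∈ S, f xm ≤ f x := fun x hx => hxm hx
  -- P nonempty : trivial decomposition
  have hfx₀P : f x₀ ∈ P := by
    refine ⟨1, fun _ => x₀, fun _ => 1, fun _ => zero_le_one, by simp, fun _ => hx₀, by simp, by simp⟩
  have hPne : P.Nonempty := ⟨_, hfx₀P⟩
  have hPbdd : BddBelow P := by
    refine ⟨f xm, ?_⟩
    rintro y ⟨m, xs, pr, hpr0, hpr1, hxsS, hsum, rfl⟩
    calc f xm = ∑ i, pr i * f xm := by rw [← Finset.sum_mul, hpr1, one_mul]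
    _ ≤ ∑ i, pr i * f (xs i) :=
      Finset.sum_le_sum fun i _ => mul_le_mul_of_nonneg_left (hmin _ (hxsS i)) (hpr0 i)
  -- D nonempty
  have hDne : D.Nonempty := ⟨f xm, f xm, 0, fun x hx => by simpa using hmin x hx, by simp⟩
  -- weak duality
  have weak : ∀ y ∈ D, ∀ z ∈ P, y ≤ z := by
    rintro y ⟨t, v, hbound, rfl⟩ z ⟨m, xs, pr, hpr0, hpr1, hxsS, hsum, rfl⟩
    have hcoord : ∀ j, ∑ i, pr i * xs i j = x₀ j := by
      intro j
      have := congrFun hsum j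
      simpa [Finset.sum_apply] using this
    have key : ∑ i, pr i * (t + ∑ j, v j * xs i j) = t + ∑ j, v j * x₀ j := by
      have h1 : ∑ i, pr i * (t + ∑ j, v j * xs i j)
          = (∑ i, pr i * t) + ∑ i, pr i * ∑ j, v j * xs i j := by
        rw [← Finset.sum_add_distrib]; exact Finset.sum_congr rfl fun i _ => by ring
      have h2 : ∑ i, pr i * ∑ j, v j * xs i j = ∑ j, v j * x₀ j := by
        have : ∀ i, pr i * ∑ j, v j * xs i j = ∑ j, v j * (pr i * xs i j) := by
          intro i; rw [Finset.mul_sum]; apply Finset.sum_congr rfl; intros; ring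
        simp only [this]
        rw [Finset.sum_comm]
        apply Finset.sum_congr rfl
        intro j _
        rw [← Finset.mul_sum, hcoord]
      rw [h1, h2, ← Finset.sum_mul, hpr1, one_mul]
    calc t + ∑ j, v j * x₀ j = ∑ i, pr i * (t + ∑ j, v j * xs i j) := key.symm
    _ ≤ ∑ i, pr i * f (xs i) :=
      Finset.sum_le_sum fun i _ => mul_le_mul_of_nonneg_left (hbound _ (hxsS i)) (hpr0 i)
  have hDbdd : BddAbove D := ⟨sInf P, fun y hy => le_csInf hPne (weak y hy)⟩
  rw [hfP]
  refine le_antisymm ?_ (csSup_le hDne fun y hy => le_csInf hPne (weak y hy))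
  -- strong direction
  refine le_of_forall_lt fun c hc => ?_
  -- the compact convex set K in (Fin d → ℝ) × ℝ
  set g : (Fin d → ℝ) → (Fin d → ℝ) × ℝ := fun x => (x, f x) with hg
  have hTcomp : IsCompact (g '' S) := hScomp.image_of_continuousOn (continuousOn_id.prodMk hf)
  set K : Set ((Fin d → ℝ) × ℝ) := convexHull ℝ (g '' S) with hK
  have hKcomp : IsCompact K := isCompact_convexHull_of_isCompact hTcomp (hS.image g)
  have hzK : ((x₀, c) : (Fin d → ℝ) × ℝ) ∉ K := by
    intro h
    rw [hK, mem_convexHull_iff_exists_fintype] at h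
    obtain ⟨ι, hfin, w, z, hw0, hw1, hzT, hsum⟩ := h
    have hz1 : ∀ i, (z i).1 ∈ S ∧ (z i).2 = f ((z i).1) := by
      intro i
      obtain ⟨x, hx, hgx⟩ := hzT i
      rw [← hgx]
      exact ⟨hx, rfl⟩
    set e := (Fintype.equivFin ι).symm
    have h1 : (∑ i, w i • z i).1 = x₀ := by rw [hsum]
    have h2 : (∑ i, w i • z i).2 = c := by rw [hsum]
    have hcP : c ∈ P := by
      refine ⟨Fintype.card ι, fun j => (z (e j)).1, fun j => w (e j),
        fun j => hw0 _, ?_, fun j => (hz1 _).1, ?_, ?_⟩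
      · rw [Fintype.sum_equiv e (fun j => w (e j)) w (fun j => rfl)]
        exact hw1
      · rw [Fintype.sum_equiv e (fun j => w (e j) • (z (e j)).1)
          (fun i => w i • (z i).1) (fun j => rfl)]
        rw [Prod.fst_sum] at h1
        simpa using h1
      · have hzz : ∀ i, w i * f ((z i).1) = w i * (z i).2 := fun i => by rw [(hz1 i).2]
        calc c = (∑ i, w i • z i).2 := h2.symm
        _ = ∑ i, w i * (z i).2 := by rw [Prod.snd_sum]; simp
        _ = ∑ j, w (e j) * (z (e j)).2 :=
          (Fintype.sum_equiv e (fun j => w (e j) * (z (e j)).2)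
            (fun i => w i * (z i).2) (fun j => rfl)).symm
        _ = ∑ j, w (e j) * f ((z (e j)).1) := by
          exact Finset.sum_congr rfl fun j _ => (hzz (e j)).symm
    exact absurd (csInf_le hPbdd hcP) (not_le.2 hc)
  obtain ⟨φ, u, hu1, hu2⟩ :=
    geometric_hahn_banach_point_closed (convex_convexHull ℝ _) hKcomp.isClosed hzK
  -- decompose φ
  set s : ℝ := φ ((0 : Fin d → ℝ), (1 : ℝ)) with hs
  set v : Fin d → ℝ := fun i => φ ((Pi.single i 1 : Fin d → ℝ), (0 : ℝ)) with hv
  have hφeq : ∀ (x : Fin d → ℝ) (y : ℝ), φ (x, y) = (∑ i, v i * x i) + y * s := by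
    intro x y
    have hxy : ((x, y) : (Fin d → ℝ) × ℝ)
        = (∑ i, x i • ((Pi.single i 1 : Fin d → ℝ), (0 : ℝ))) + y • ((0 : Fin d → ℝ), (1 : ℝ)) := by
      refine Prod.ext ?_ ?_
      · simp only [Prod.fst_sum, Prod.fst_add, Prod.smul_fst, Prod.snd_add]
        ext j
        simp [Pi.single_apply, Finset.sum_apply, Finset.sum_ite_eq, eq_comm]
      · simp [Prod.snd_sum]
    rw [hxy, map_add, map_sum, map_smul]
    simp only [smul_eq_mul, hs, hv]
    congr 1
    apply Finset.sum_congr rfl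
    intro i _
    rw [map_smul, smul_eq_mul, mul_comm]
  -- s > 0
  have hfstar_le : sInf P ≤ f x₀ := csInf_le hPbdd hfx₀P
  have hcfx₀ : c < f x₀ := lt_of_lt_of_le hc hfstar_le
  have hspos : 0 < s := by
    have hb : ((x₀, f x₀) : (Fin d → ℝ) × ℝ) ∈ K :=
      subset_convexHull ℝ _ ⟨x₀, hx₀, rfl⟩
    have h1 := hu2 _ hb
    have h2 : φ (x₀, f x₀) = (∑ i, v i * x₀ i) + f x₀ * s := hφeq _ _
    have h3 : φ (x₀, c) = (∑ i, v i * x₀ i) + c * s := hφeq _ _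
    have : c * s < f x₀ * s := by
      have := lt_trans hu1 h1
      rw [h2, h3] at this
      linarith
    by_contra hns
    push_neg at hns
    nlinarith
  -- the affine minorant
  set V₀ : ℝ := ∑ i, v i * x₀ i with hV₀
  have hDmem : ((u - V₀) / s) ∈ D := by
    refine ⟨u / s, fun i => -(v i) / s, ?_, ?_⟩
    · intro x hx
      have h1 := hu2 _ (subset_convexHull ℝ _ ⟨x, hx, rfl⟩)
      rw [hφeq] at h1
      have h2 : ∑ i, (-(v i) / s) * x i = -(∑ i, v i * x i) / s := by
        rw [neg_div, Finset.sum_div, ← Finset.sum_neg_distrib]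
        exact Finset.sum_congr rfl fun i _ => by ring
      rw [h2, ← add_div, div_le_iff₀ hspos]
      linarith
    · have h2 : ∑ i, (-(v i) / s) * x₀ i = -V₀ / s := by
        rw [hV₀, neg_div, Finset.sum_div, ← Finset.sum_neg_distrib]
        exact Finset.sum_congr rfl fun i _ => by ring
      rw [h2, ← add_div, sub_eq_add_neg]
  have hclt : c < (u - V₀) / s := by
    have h3 : φ (x₀, c) = V₀ + c * s := hφeq _ _
    rw [lt_div_iff₀ hspos]
    rw [h3] at hu1
    linarith
  exact lt_csSup_of_lt hDbdd hDmem hclt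


end
end

section
/- Let S ⊆ ℝ^d be a nonempty compact convex set, f : S → ℝ continuous, and let x₀ be an interior point of S. Then the dual supremum is attained: there exist t ∈ ℝ and v ∈ ℝ^d such that t + v·x ≤ f(x) for all x ∈ S and t + v·x₀ = f⋆(x₀). -/
noncomputable section
open Pointwise

/-- Proposition 8, attainment: for `x₀` in the interior of `S`, the dual
supremum is attained. -/
theorem fstar_dual_attained_of_interior {d : ℕ} (S : Set (Fin d → ℝ))
    (f : (Fin d → ℝ) → ℝ) (hS : S.Nonempty) (hScomp : IsCompact S)
    (hSconv : Convex ℝ S) (hf : ContinuousOn f S)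
    (x₀ : Fin d → ℝ) (hx₀ : x₀ ∈ interior S) :
    ∃ (t : ℝ) (v : Fin d → ℝ),
      (∀ x ∈ S, t + (∑ i, v i * x i) ≤ f x) ∧
      t + (∑ i, v i * x₀ i) = fstar S f x₀ := by
  classical
  have hx₀S : x₀ ∈ S := interior_subset hx₀
  set A : Set ℝ := {y | ∃ (m : ℕ) (xs : Fin m → Fin d → ℝ) (pr : Fin m → ℝ),
    (∀ i, 0 ≤ pr i) ∧ (∑ i, pr i) = 1 ∧ (∀ i, xs i ∈ S) ∧
    (∑ i, pr i • xs i) = x₀ ∧ y = ∑ i, pr i * f (xs i)} with hA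
  have hfstar : fstar S f x₀ = sInf A := rfl
  set μ : ℝ := sInf A with hμ
  -- A is nonempty
  have hAne : A.Nonempty := by
    refine ⟨f x₀, 1, (fun _ => x₀), (fun _ => 1), fun i => zero_le_one, by simp, fun i => hx₀S,
      by simp, by simp⟩
  -- A is bounded below
  have hfIm : IsCompact (f '' S) := hScomp.image_of_continuousOn hf
  obtain ⟨B, hB⟩ := hfIm.bddBelow
  obtain ⟨M, hM⟩ := hfIm.bddAbove
  have hBle : ∀ x ∈ S, B ≤ f x := fun x hx => hB ⟨x, hx, rfl⟩
  have hMle : ∀ x ∈ S, f x ≤ M := fun x hx => hM ⟨x, hx, rfl⟩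
  have hAbdd : BddBelow A := by
    refine ⟨B, ?_⟩
    rintro y ⟨m, xs, pr, h0, h1, hmem, -, rfl⟩
    calc B = ∑ i, pr i * B := by rw [← Finset.sum_mul, h1, one_mul]
    _ ≤ ∑ i, pr i * f (xs i) :=
      Finset.sum_le_sum fun i _ => mul_le_mul_of_nonneg_left (hBle _ (hmem i)) (h0 i)
  -- the graph and its hull
  set G : Set ((Fin d → ℝ) × ℝ) := (fun x => (x, f x)) '' S with hG
  set H : Set ((Fin d → ℝ) × ℝ) := convexHull ℝ G with hH
  set C : Set ((Fin d → ℝ) × ℝ) := {(0 : Fin d → ℝ)} ×ˢ Set.Ici (0 : ℝ) with hC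
  set K' : Set ((Fin d → ℝ) × ℝ) := H + C with hK'
  have hK'conv : Convex ℝ K' :=
    (convex_convexHull ℝ G).add ((convex_singleton _).prod (convex_Ici 0))
  -- points of the hull above x₀ give elements of A
  have hullA : ∀ q : (Fin d → ℝ) × ℝ, q ∈ H → q.1 = x₀ → q.2 ∈ A := by
    rintro q hq hq1
    rw [hH, mem_convexHull_iff_exists_fintype] at hq
    obtain ⟨ι, _inst, w, z, hw0, hw1, hz, hsum⟩ := hq
    have hz1 : ∀ j, (z j).1 ∈ S := by
      intro j; obtain ⟨x, hxS, hxz⟩ := hz j; rw [← hxz]; exact hxS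
    have hz2 : ∀ j, (z j).2 = f ((z j).1) := by
      intro j; obtain ⟨x, hxS, hxz⟩ := hz j; rw [← hxz]
    set e : Fin (Fintype.card ι) ≃ ι := (Fintype.equivFin ι).symm with he
    refine ⟨Fintype.card ι, fun i => (z (e i)).1, fun i => w (e i), fun i => hw0 _, ?_, fun i => hz1 _, ?_, ?_⟩
    · rw [Equiv.sum_comp e w, hw1]
    · have : (∑ i, w (e i) • z (e i)).1 = ∑ i, w (e i) • (z (e i)).1 := by
        rw [Prod.fst_sum]
        exact Finset.sum_congr rfl fun i _ => Prod.smul_fst _ _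
      rw [← this, Equiv.sum_comp e (fun j => w j • z j), hsum, hq1]
    · have : (∑ i, w (e i) • z (e i)).2 = ∑ i, w (e i) • (z (e i)).2 := by
        rw [Prod.snd_sum]
        exact Finset.sum_congr rfl fun i _ => Prod.smul_snd _ _
      have h2 : q.2 = ∑ i, w (e i) • (z (e i)).2 := by
        rw [← this, Equiv.sum_comp e (fun j => w j • z j), hsum]
      rw [h2]
      exact Finset.sum_congr rfl fun i _ => by rw [smul_eq_mul, hz2]
  -- membership of graph points in K'
  have hgraphK' : ∀ x ∈ S, ((x, f x) : (Fin d → ℝ) × ℝ) ∈ K' := by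
    intro x hx
    rw [hK', Set.mem_add]
    refine ⟨(x, f x), subset_convexHull ℝ G ⟨x, hx, rfl⟩, (0, 0), ?_, by simp⟩
    exact Set.mem_prod.2 ⟨Set.mem_singleton _, Set.self_mem_Ici⟩
  -- a ball around x₀
  obtain ⟨r, hr0, hrball⟩ := Metric.isOpen_iff.1 isOpen_interior x₀ hx₀
  have hrS : Metric.ball x₀ r ⊆ S := fun x hx => interior_subset (hrball hx)
  -- open box inside K'
  have hbox : Metric.ball x₀ r ×ˢ Set.Ioi M ⊆ K' := by
    rintro ⟨x, y⟩ ⟨hx, hy⟩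
    rw [hK', Set.mem_add]
    refine ⟨(x, f x), subset_convexHull ℝ G ⟨x, hrS hx, rfl⟩, (0, y - f x), ?_, by simp⟩
    exact Set.mem_prod.2 ⟨Set.mem_singleton _,
      sub_nonneg.2 ((hMle x (hrS hx)).trans (le_of_lt hy))⟩
  have hboxint : ∀ y, M < y → ((x₀, y) : (Fin d → ℝ) × ℝ) ∈ interior K' := by
    intro y hy
    exact interior_maximal hbox ((Metric.isOpen_ball).prod isOpen_Ioi)
      ⟨Metric.mem_ball_self hr0, hy⟩
  -- (x₀, μ) is not in the interior of K'
  have hnotin : ((x₀, μ) : (Fin d → ℝ) × ℝ) ∉ interior K' := by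
    intro hmem
    rw [mem_interior_iff_mem_nhds, Metric.mem_nhds_iff] at hmem
    obtain ⟨ε, hε0, hεball⟩ := hmem
    have hpt : ((x₀, μ - ε / 2) : (Fin d → ℝ) × ℝ) ∈ K' := by
      apply hεball
      rw [Metric.mem_ball, Prod.dist_eq]
      simp only [dist_self]
      rw [Real.dist_eq]
      have : |μ - ε / 2 - μ| = ε / 2 := by rw [show μ - ε / 2 - μ = -(ε/2) by ring, abs_neg,
        abs_of_pos (by linarith)]
      rw [this]
      simp [hε0]
    rw [hK', Set.mem_add] at hpt
    obtain ⟨q, hqH, b, hbC, hqb⟩ := hpt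
    obtain ⟨hb1, hb2⟩ := hbC
    simp only [Set.mem_singleton_iff] at hb1
    have hq1 : q.1 = x₀ := by
      have := congrArg Prod.fst hqb
      simpa [hb1] using this
    have hq2 : q.2 ≤ μ - ε / 2 := by
      have := congrArg Prod.snd hqb
      simp only [Prod.snd_add] at this
      have hb2' : (0 : ℝ) ≤ b.2 := hb2
      linarith
    have : μ ≤ q.2 := csInf_le hAbdd (hullA q hqH hq1)
    linarith
  -- separating functional
  obtain ⟨φ, hφ⟩ := geometric_hahn_banach_open_point (hK'conv.interior) isOpen_interior hnotin
  set c : ℝ := φ (x₀, μ) with hc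
  -- φ ≤ c on all of K' via segments from an interior point
  have hq₀ : ((x₀, M + 1) : (Fin d → ℝ) × ℝ) ∈ interior K' := hboxint _ (by linarith)
  have hle : ∀ p ∈ K', φ p ≤ c := by
    intro p hp
    by_contra hcon
    push_neg at hcon
    have hkey : ∀ s : ℝ, 0 < s → s ≤ 1 →
        s * φ (x₀, M + 1) + (1 - s) * φ p < c := by
      intro s hs hs1
      have hmem := hK'conv.combo_interior_self_mem_interior (a := s) (b := 1 - s) hq₀ hp hs
        (by linarith) (by ring)
      have h := hφ _ hmem
      rw [map_add, map_smul, map_smul] at h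
      simpa [smul_eq_mul] using h
    have hq₀lt : φ (x₀, M + 1) < c := hφ _ hq₀
    set D : ℝ := φ p - φ (x₀, M + 1) with hD
    have hD0 : 0 < D := by rw [hD]; linarith
    set s : ℝ := min 1 ((φ p - c) / (2 * D)) with hs
    have hs0 : 0 < s := lt_min one_pos (div_pos (by linarith) (by linarith))
    have hs1 : s ≤ 1 := min_le_left _ _
    have hDne : D ≠ 0 := ne_of_gt hD0
    have hsD : s * D ≤ (φ p - c) / 2 := by
      have h1 : s ≤ (φ p - c) / (2 * D) := min_le_right _ _
      calc s * D ≤ (φ p - c) / (2 * D) * D := by nlinarith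
      _ = (φ p - c) / 2 := by
          rw [div_mul_eq_mul_div, mul_comm (2:ℝ) D, ← div_div,
            mul_div_assoc, div_self hDne, mul_one]
    have := hkey s hs0 hs1
    have hexp : s * φ (x₀, M + 1) + (1 - s) * φ p = φ p - s * D := by rw [hD]; ring
    rw [hexp] at this
    linarith
  -- decompose φ
  set a : ℝ := φ ((0 : Fin d → ℝ), (1 : ℝ)) with ha
  set ψ : (Fin d → ℝ) → ℝ := fun x => φ (x, (0 : ℝ)) with hψ
  have hdecomp : ∀ (x : Fin d → ℝ) (y : ℝ), φ (x, y) = ψ x + y * a := by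
    intro x y
    have hxy : ((x, y) : (Fin d → ℝ) × ℝ) = (x, (0:ℝ)) + y • ((0 : Fin d → ℝ), (1:ℝ)) := by
      simp [Prod.ext_iff]
    rw [hxy, map_add, map_smul, smul_eq_mul, hψ, ha]
  -- ψ as a sum
  have hψsum : ∀ x : Fin d → ℝ, ψ x = ∑ i, x i * ψ (Pi.single i 1) := by
    intro x
    have hxrep : ((x, (0:ℝ)) : (Fin d → ℝ) × ℝ)
        = ∑ i, x i • (((Pi.single i 1 : Fin d → ℝ)), (0:ℝ)) := by
      rw [Prod.ext_iff]
      constructor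
      · rw [Prod.fst_sum]
        funext j
        rw [Finset.sum_apply]
        simp [Pi.single_apply]
      · rw [Prod.snd_sum]
        simp
    rw [hψ]
    simp only
    rw [hxrep, map_sum]
    exact Finset.sum_congr rfl fun i _ => by rw [map_smul, smul_eq_mul]
  -- a < 0
  have haM : ∀ y, M < y → ψ x₀ + y * a < c := by
    intro y hy
    have := hφ _ (hboxint y hy)
    rwa [hdecomp] at this
  have hcval : c = ψ x₀ + μ * a := by rw [hc, hdecomp]
  have ha0 : a < 0 := by
    rcases lt_trichotomy a 0 with h | h | h
    · exact h
    · exfalso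
      have := haM (M + 1) (by linarith)
      rw [h] at this hcval
      simp at this hcval
      linarith
    · exfalso
      set y : ℝ := max (M + 1) ((c - ψ x₀ + 1) / a) with hy
      have hy1 : M < y := lt_of_lt_of_le (by linarith) (le_max_left _ _)
      have hy2 : (c - ψ x₀ + 1) / a ≤ y := le_max_right _ _
      have hy3 : c - ψ x₀ + 1 ≤ y * a := by
        rw [div_le_iff₀ h] at hy2; linarith
      have := haM y hy1
      linarith
  -- define t and v
  refine ⟨μ + ψ x₀ / a, fun i => -(ψ (Pi.single i 1)) / a, ?_, ?_⟩
  · intro x hx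
    have hsum : ∑ i, (-(ψ (Pi.single i 1)) / a) * x i = -(ψ x) / a := by
      rw [hψsum x, ← Finset.sum_neg_distrib, Finset.sum_div]
      exact Finset.sum_congr rfl fun i _ => by ring
    rw [hsum]
    have hphile : φ (x, f x) ≤ c := hle _ (hgraphK' x hx)
    rw [hdecomp, hcval] at hphile
    -- ψ x + f x * a ≤ ψ x₀ + μ * a, a < 0 ⊢ μ + ψ x₀ / a + -ψ x / a ≤ f x
    have h1 : ψ x₀ / a * a = ψ x₀ := div_mul_cancel₀ _ (ne_of_lt ha0)
    have h2 : ψ x / a * a = ψ x := div_mul_cancel₀ _ (ne_of_lt ha0)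
    by_contra hcon
    push_neg at hcon
    have key : (μ + ψ x₀ / a + -(ψ x) / a - f x) * a
        = μ * a + ψ x₀ - ψ x - f x * a := by linear_combination h1 - h2
    have hE : (0:ℝ) < μ + ψ x₀ / a + -(ψ x) / a - f x := by linarith
    have hneg := mul_neg_of_pos_of_neg hE ha0
    rw [key] at hneg
    linarith
  · have hsum : ∑ i, (-(ψ (Pi.single i 1)) / a) * x₀ i = -(ψ x₀) / a := by
      rw [hψsum x₀, ← Finset.sum_neg_distrib, Finset.sum_div]
      exact Finset.sum_congr rfl fun i _ => by ring
    rw [hsum, hfstar]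
    ring

end
end
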